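/- Let C be a pure normal simplicial complex of dimension d−1, let S be a nonempty set of vertices of C, and let Γ=[F_0,…,F_N] be a dual path in C in which F_N is the only facet intersecting S. Then Γ is a combinatorial segment from F_0 to S (for some anchor x_0∈F_0) if and only if the facets of Γ can be equipped with vertex orderings (namely, the implicit orderings of the combinatorial segment) making Γ monotone and conservative towards S. -/

import Mathlib

/-! Common definitions: pure simplicial complexes (represented by their facet sets),
vertex-distance, links, ordered facets, vectors of distances, admissibility, and
monotone/conservative dual paths, following Adiprasito–Benedetti's combinatorial
segments. -/

open scoped Classical

noncomputable section

namespace MCP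
set_option linter.unusedSectionVars false

variable {V : Type} [DecidableEq V] [Fintype V]

/-- The vertex set of the complex whose set of facets is `C`. -/
def verts (C : Finset (Finset V)) : Finset V := C.sup id

/-- `f` is a face of the pure complex with facet set `C`. -/
def IsFace (C : Finset (Finset V)) (f : Finset V) : Prop := ∃ F ∈ C, f ⊆ F

/-- `C` is pure of dimension `d - 1`: every facet has `d` vertices. -/
def Pure (C : Finset (Finset V)) (d : ℕ) : Prop := ∀ F ∈ C, F.card = d

/-- The 1-skeleton of the complex: two vertices are joined iff they lie in a common facet. -/
def skeleton (C : Finset (Finset V)) : SimpleGraph V where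
  Adj u v := u ≠ v ∧ ∃ F ∈ C, u ∈ F ∧ v ∈ F
  symm := by
    constructor
    rintro u v ⟨h, F, hF, hu, hv⟩
    exact ⟨h.symm, F, hF, hv, hu⟩
  loopless := by constructor; rintro u ⟨h, -⟩; exact h rfl

/-- Two facets are adjacent in the dual graph iff they differ in a single vertex. -/
def AdjFacets (F G : Finset V) : Prop :=
  F ≠ G ∧ F.card = G.card ∧ (F ∩ G).card + 1 = F.card

/-- A dual path: a list of facets of `C` in which consecutive facets are adjacent. -/
def IsDualPath (C : Finset (Finset V)) (P : List (Finset V)) : Prop :=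
  (∀ F ∈ P, F ∈ C) ∧ P.Chain' AdjFacets

/-- `C` is normal: for every face `f`, any two facets containing `f` are joined by a
dual path all of whose facets contain `f`. -/
def Normal (C : Finset (Finset V)) : Prop :=
  ∀ f : Finset V, ∀ F ∈ C, ∀ G ∈ C, f ⊆ F → f ⊆ G →
    ∃ P : List (Finset V), P.head? = some F ∧ P.getLast? = some G ∧
      (∀ H ∈ P, H ∈ C ∧ f ⊆ H) ∧ P.Chain' AdjFacets

/-- The (facet set of the) link of a vertex `x` in `C`. -/
def link (C : Finset (Finset V)) (x : V) : Finset (Finset V) :=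
  (C.filter (fun F => x ∈ F)).image (fun F => F.erase x)

/-- Vertex-distance (in the 1-skeleton) between two sets of vertices, with value `⊤`
if one of the sets is empty, and with the special `0/1` convention when the complex
is `0`-dimensional. -/
def vdistSets (C : Finset (Finset V)) (S T : Finset V) : ℕ∞ :=
  if C.sup Finset.card ≤ 1 then
    (if S.Nonempty ∧ T.Nonempty then (if (S ∩ T).Nonempty then 0 else 1) else ⊤)
  else ⨅ u ∈ S, ⨅ v ∈ T, (skeleton C).edist u v

/-- The derived target set `S'` in the link of `x`, used in the recursive definitions
of the vector of distances and of admissibility. -/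
def targetSet (C : Finset (Finset V)) (x : V) (S : Finset V) : Finset V :=
  if x ∈ S then S ∩ verts (link C x)
  else (verts (link C x)).filter
    (fun w => vdistSets C {w} S + 1 = vdistSets C {x} S)

/-- The vector of distances from an ordered facet (a list of vertices) to a target set. -/
def distVector : Finset (Finset V) → List V → Finset V → List ℕ∞
  | _, [], _ => []
  | C, x :: rest, S => vdistSets C {x} S :: distVector (link C x) rest (targetSet C x S)

/-- Admissibility of an ordering of a facet with respect to a target set: the first
vertex realizes the vertex-distance from the facet to the target set, and recursively
in the link. -/
def Admissible : Finset (Finset V) → List V → Finset V → Prop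
  | _, [], _ => True
  | C, x :: rest, S =>
      vdistSets C {x} S = vdistSets C (x :: rest).toFinset S ∧
      Admissible (link C x) rest (targetSet C x S)

/-- An ordered facet of `C`: a repetition-free list of vertices forming a facet. -/
def IsOrderedFacet (C : Finset (Finset V)) (L : List V) : Prop :=
  L.Nodup ∧ L.toFinset ∈ C

/-- A dual path of ordered facets. -/
def IsOrderedDualPath (C : Finset (Finset V)) (Γ : List (List V)) : Prop :=
  (∀ L ∈ Γ, IsOrderedFacet C L) ∧
  Γ.Chain' (fun L M => AdjFacets L.toFinset M.toFinset)

/-- A path of ordered facets is monotone towards `S` if its vectors of distances are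
strictly lexicographically decreasing. -/
def MonotonePath (C : Finset (Finset V)) (S : Finset V) (Γ : List (List V)) : Prop :=
  Γ.Chain' (fun L M => List.Lex (· < ·) (distVector C M S) (distVector C L S))

/-- The index of a step: the least position at which the two orderings differ. -/
def stepIndex (L M : List V) : ℕ := sInf {k : ℕ | L[k]? ≠ M[k]?}

/-- The step from `L` to `M` is conservative towards `S`: the removed vertex is the last
vertex of `L`, and `M` is admissibly ordered with maximum index among all admissible
reorderings. -/
def ConservativeStep (C : Finset (Finset V)) (S : Finset V) (L M : List V) : Prop :=
  (∃ x, L.getLast? = some x ∧ L.toFinset \ M.toFinset = {x}) ∧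
  Admissible C M S ∧
  ∀ M' : List V, M'.Perm M → Admissible C M' S → stepIndex L M' ≤ stepIndex L M

/-- A path of ordered facets is conservative towards `S` if its first facet is
admissibly ordered and every step is conservative. -/
def ConservativePath (C : Finset (Finset V)) (S : Finset V) (Γ : List (List V)) : Prop :=
  (∀ L ∈ Γ.head?, Admissible C L S) ∧ Γ.Chain' (ConservativeStep C S)

/-- A monotone conservative dual path of ordered facets towards `S`. -/
def MonoConsPath (C : Finset (Finset V)) (S : Finset V) (Γ : List (List V)) : Prop :=
  IsOrderedDualPath C Γ ∧ MonotonePath C S Γ ∧ ConservativePath C S Γ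

/-- The path `Γ` starts at the facet `F`. -/
def StartsAt (Γ : List (List V)) (F : Finset V) : Prop :=
  ∃ L, Γ.head? = some L ∧ L.toFinset = F

/-- The path `Γ` ends at the facet `F`. -/
def EndsAt (Γ : List (List V)) (F : Finset V) : Prop :=
  ∃ L, Γ.getLast? = some L ∧ L.toFinset = F

/-- `C` is flag: every set of vertices of `C` pairwise joined by edges of `C` is a face. -/
def Flag (C : Finset (Finset V)) : Prop :=
  ∀ T : Finset V, T ⊆ verts C →
    (∀ u ∈ T, ∀ v ∈ T, u ≠ v → (skeleton C).Adj u v) → IsFace C T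

/-- A critical clique: a clique of the 1-skeleton that becomes a face after removing a
suitable vertex. -/
def CriticalClique (C : Finset (Finset V)) (T : Finset V) : Prop :=
  (∀ u ∈ T, ∀ v ∈ T, u ≠ v → (skeleton C).Adj u v) ∧ ∃ v ∈ T, IsFace C (T.erase v)

/-- `C` is `k`-banner: every critical clique with at least `k + 1` vertices is a face. -/
def Banner (C : Finset (Finset V)) (k : ℕ) : Prop :=
  ∀ T : Finset V, CriticalClique C T → k + 1 ≤ T.card → IsFace C T

/-- A pure `(d-1)`-complex is a pseudomanifold (possibly with boundary) if every
`(d-2)`-dimensional face lies in at most two facets. -/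
def Pseudomanifold (C : Finset (Finset V)) (d : ℕ) : Prop :=
  ∀ f : Finset V, f.card + 1 = d → IsFace C f → (C.filter (fun F => f ⊆ F)).card ≤ 2

/-- A pure `(d-1)`-complex is a pseudomanifold without boundary if every
`(d-2)`-dimensional face lies in exactly two facets. -/
def PseudomanifoldNoBoundary (C : Finset (Finset V)) (d : ℕ) : Prop :=
  ∀ f : Finset V, f.card + 1 = d → IsFace C f → (C.filter (fun F => f ⊆ F)).card = 2

/-- The join of two complexes (given by their facet sets, on disjoint vertex sets). -/
def join (C₁ C₂ : Finset (Finset V)) : Finset (Finset V) :=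
  (C₁ ×ˢ C₂).image (fun p => p.1 ∪ p.2)

/-- The one-point-suspension of `C` at the vertex `v`; the two new suspension vertices
are `Sum.inr false` and `Sum.inr true`. -/
def ops (C : Finset (Finset V)) (v : V) : Finset (Finset (V ⊕ Bool)) :=
  ((C.filter (fun F => v ∈ F)).image
      (fun F => ((F.erase v).image Sum.inl) ∪ {Sum.inr false, Sum.inr true}))
  ∪ ((C.filter (fun F => v ∉ F)).image (fun F => (F.image Sum.inl) ∪ {Sum.inr false}))
  ∪ ((C.filter (fun F => v ∉ F)).image (fun F => (F.image Sum.inl) ∪ {Sum.inr true}))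

/-- The degree of a vertex in the 1-skeleton of `C`. -/
def degree (C : Finset (Finset V)) (x : V) : ℕ :=
  (Finset.univ.filter fun w => (skeleton C).Adj x w).card

/-- Vertex-decomposability of a pure complex given by its facet set: either a single
simplex, or there is a vertex whose deletion stays pure of the same dimension and whose
link and deletion are both vertex-decomposable.  (The condition
`∀ F ∈ C, ∃ G ∈ C, x ∉ G ∧ F.erase x ⊆ G` expresses that the deletion of `x` is pure
of the same dimension, so that its facets are the facets of `C` avoiding `x`.) -/
inductive VertexDecomposable : Finset (Finset V) → Prop
  | simplex (F : Finset V) : VertexDecomposable {F}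
  | step (C : Finset (Finset V)) (x : V) (hx : x ∈ verts C)
      (hdelpure : ∀ F ∈ C, ∃ G ∈ C, x ∉ G ∧ F.erase x ⊆ G)
      (hlink : VertexDecomposable (link C x))
      (hdel : VertexDecomposable (C.filter (fun F => x ∉ F))) :
      VertexDecomposable C

/-- The maximum length (number of steps) of a monotone conservative path in `C`, over
all nonempty target sets of vertices of `C`. -/
def maxl (C : Finset (Finset V)) : ℕ :=
  sSup {n : ℕ | ∃ (S : Finset V) (Γ : List (List V)), S.Nonempty ∧ S ⊆ verts C ∧
    MonoConsPath C S Γ ∧ Γ.length = n + 1}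

/-- `CombSeg C Γ S x₀`: the dual path `Γ` is a combinatorial segment in `C` from its
first facet to the target set `S`, anchored at `x₀` (Adiprasito–Benedetti). -/
inductive CombSeg : Finset (Finset V) → List (Finset V) → Finset V → V → Prop
  | intersects (C : Finset (Finset V)) (F S : Finset V) (x₀ : V)
      (hF : F ∈ C) (hx : x₀ ∈ F) (hFS : (F ∩ S).Nonempty) :
      CombSeg C [F] S x₀
  | dimOne (C : Finset (Finset V)) (S : Finset V) (x₀ v : V)
      (hdim : ∀ F ∈ C, F.card = 1)
      (h₁ : {x₀} ∈ C) (h₂ : {v} ∈ C) (hx : x₀ ∉ S) (hv : v ∈ S) :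
      CombSeg C [{x₀}, {v}] S x₀
  | step (C : Finset (Finset V)) (F₀ : Finset V) (Γ₁ Γ₂ : List (Finset V))
      (Fk S : Finset V) (x₀ y x₀' : V) (ℓ : ℕ∞)
      (hdim : ∀ F ∈ C, 2 ≤ F.card)
      (hmem : ∀ F ∈ F₀ :: Γ₁, F ∈ C)
      (hdisj : ∀ F ∈ F₀ :: Γ₁, F ∩ S = ∅)
      (hℓ : vdistSets C F₀ S = ℓ)
      (hbefore : ∀ F ∈ F₀ :: Γ₁, ¬ vdistSets C F S < ℓ)
      (hafter : vdistSets C Fk S < ℓ)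
      (hy : y ∈ Fk)
      (hyd : vdistSets C {y} S + 1 = ℓ)
      (hyuniq : ∀ z ∈ Fk, vdistSets C {z} S + 1 = ℓ → z = y)
      (hx₀ : ∀ F ∈ F₀ :: Γ₁, x₀ ∈ F) (hx₀k : x₀ ∈ Fk)
      (hlink : CombSeg (link C x₀)
          (((F₀ :: Γ₁) ++ [Fk]).map (fun F => F.erase x₀))
          ((verts (link C x₀)).filter (fun w => vdistSets C {w} S + 1 = ℓ)) x₀')
      (htail : CombSeg C (Fk :: Γ₂) S y) :
      CombSeg C (F₀ :: Γ₁ ++ Fk :: Γ₂) S x₀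

/-! ### Auxiliary lemmas -/

section Aux

variable {C : Finset (Finset V)} {S T F G : Finset V} {x u v : V} {d : ℕ}

lemma mem_verts : u ∈ verts C ↔ ∃ F ∈ C, u ∈ F := by
  simp [verts, Finset.mem_sup]

lemma mem_link {G : Finset V} :
    G ∈ link C x ↔ ∃ F ∈ C, x ∈ F ∧ F.erase x = G := by
  simp [link, Finset.mem_image, Finset.mem_filter, and_assoc]

lemma erase_mem_link (hF : F ∈ C) (hx : x ∈ F) : F.erase x ∈ link C x :=
  mem_link.2 ⟨F, hF, hx, rfl⟩

lemma link_pure (h : Pure C d) (x : V) : Pure (link C x) (d - 1) := by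
  intro G hG
  obtain ⟨F, hF, hx, rfl⟩ := mem_link.1 hG
  rw [Finset.card_erase_of_mem hx, h F hF]

lemma adjFacets_card_sdiff (h : AdjFacets F G) : (F \ G).card = 1 := by
  obtain ⟨hne, hcard, hint⟩ := h
  have := Finset.card_inter_add_card_sdiff F G
  omega

lemma adjFacets_sdiff (h : AdjFacets F G) : ∃ r, F \ G = {r} :=
  Finset.card_eq_one.1 (adjFacets_card_sdiff h)

lemma adjFacets_symm (h : AdjFacets F G) : AdjFacets G F := by
  obtain ⟨hne, hcard, hint⟩ := h
  exact ⟨hne.symm, hcard.symm, by rwa [Finset.inter_comm, ← hcard]⟩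

lemma adjFacets_erase (h : AdjFacets F G) (hxF : x ∈ F) (hxG : x ∈ G) :
    AdjFacets (F.erase x) (G.erase x) := by
  obtain ⟨hne, hcard, hint⟩ := h
  have hxint : x ∈ F ∩ G := Finset.mem_inter.2 ⟨hxF, hxG⟩
  have hcard1 : 1 ≤ F.card := Finset.card_pos.2 ⟨x, hxF⟩
  refine ⟨?_, ?_, ?_⟩
  · intro he
    apply hne
    rw [← Finset.insert_erase hxF, ← Finset.insert_erase hxG, he]
  · rw [Finset.card_erase_of_mem hxF, Finset.card_erase_of_mem hxG, hcard]
  · have hinter : F.erase x ∩ G.erase x = (F ∩ G).erase x := by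
      ext a; simp [Finset.mem_erase, Finset.mem_inter]; tauto
    rw [hinter, Finset.card_erase_of_mem hxint, Finset.card_erase_of_mem hxF]
    have h1 : 1 ≤ (F ∩ G).card := Finset.card_pos.2 ⟨x, hxint⟩
    omega

/-- key: mem of sdiff singleton -/
lemma mem_of_sdiff_singleton {r : V} (h : F \ G = {r}) (hu : u ∈ F) (hur : u ≠ r) :
    u ∈ G := by
  by_contra hG
  have : u ∈ F \ G := Finset.mem_sdiff.2 ⟨hu, hG⟩
  rw [h, Finset.mem_singleton] at this
  exact hur this

/-! #### vertex distance lemmas -/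

lemma vdistSets_deg (h : C.sup Finset.card ≤ 1) :
    vdistSets C T S = if T.Nonempty ∧ S.Nonempty then
      (if (T ∩ S).Nonempty then 0 else 1) else ⊤ := by
  unfold vdistSets; rw [if_pos h]

lemma vdistSets_ndeg (h : ¬ C.sup Finset.card ≤ 1) :
    vdistSets C T S = ⨅ u ∈ T, ⨅ v ∈ S, (skeleton C).edist u v := by
  unfold vdistSets; rw [if_neg h]

lemma vd_ndeg (h : ¬ C.sup Finset.card ≤ 1) :
    vdistSets C {u} S = ⨅ v ∈ S, (skeleton C).edist u v := by
  rw [vdistSets_ndeg h]; simp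

lemma singleton_inter_nonempty : ({u} ∩ S).Nonempty ↔ u ∈ S := by
  constructor
  · rintro ⟨a, ha⟩
    rw [Finset.mem_inter, Finset.mem_singleton] at ha
    exact ha.1 ▸ ha.2
  · intro h
    exact ⟨u, Finset.mem_inter.2 ⟨Finset.mem_singleton_self u, h⟩⟩

lemma vdistSets_deg_empty (h : C.sup Finset.card ≤ 1) (hS : ¬ S.Nonempty) :
    vdistSets C T S = ⊤ := by
  rw [vdistSets_deg h, if_neg (by tauto)]

lemma vdistSets_deg_val (h : C.sup Finset.card ≤ 1) (hT : T.Nonempty) (hS : S.Nonempty) :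
    vdistSets C T S = if (T ∩ S).Nonempty then 0 else 1 := by
  rw [vdistSets_deg h, if_pos ⟨hT, hS⟩]

lemma vd_deg_val (h : C.sup Finset.card ≤ 1) (hS : S.Nonempty) :
    vdistSets C {u} S = if u ∈ S then 0 else 1 := by
  rw [vdistSets_deg_val h (Finset.singleton_nonempty u) hS]
  by_cases hus : u ∈ S
  · rw [if_pos (singleton_inter_nonempty.2 hus), if_pos hus]
  · rw [if_neg (fun hc => hus (singleton_inter_nonempty.1 hc)), if_neg hus]

lemma vdist_le_single (hu : u ∈ T) : vdistSets C T S ≤ vdistSets C {u} S := by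
  by_cases h : C.sup Finset.card ≤ 1
  · by_cases hS : S.Nonempty
    · rw [vdistSets_deg_val h ⟨u, hu⟩ hS, vd_deg_val h hS]
      by_cases hus : u ∈ S
      · have hts : (T ∩ S).Nonempty := ⟨u, Finset.mem_inter.2 ⟨hu, hus⟩⟩
        simp [hts, hus]
      · simp only [if_neg hus]
        split_ifs <;> norm_num
    · rw [vdistSets_deg_empty h hS, vdistSets_deg_empty h hS]
  · rw [vdistSets_ndeg h, vd_ndeg h]
    exact iInf₂_le u hu

lemma vdist_exists (hT : T.Nonempty) :
    ∃ u ∈ T, vdistSets C {u} S = vdistSets C T S := by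
  obtain ⟨u, hu, hmin⟩ := T.exists_min_image (fun u => vdistSets C {u} S) hT
  refine ⟨u, hu, le_antisymm ?_ (vdist_le_single hu)⟩
  by_cases h : C.sup Finset.card ≤ 1
  · by_cases hS : S.Nonempty
    · rw [vdistSets_deg_val h hT hS]
      by_cases hts : (T ∩ S).Nonempty
      · obtain ⟨a, ha⟩ := hts
        rw [Finset.mem_inter] at ha
        have h0 : vdistSets C {u} S ≤ 0 := le_trans (hmin a ha.1)
          (le_of_eq (by rw [vd_deg_val h hS, if_pos ha.2]))
        exact le_trans h0 zero_le
      · rw [if_neg hts, vd_deg_val h hS]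
        split_ifs <;> norm_num
    · conv_rhs => rw [vdistSets_deg_empty h hS]
      exact le_top
  · conv_rhs => rw [vdistSets_ndeg h]
    refine le_iInf₂ fun a ha => ?_
    exact le_trans (hmin a ha) (le_of_eq (vd_ndeg h))

lemma sup_card_ge (hF : F ∈ C) (h2 : 2 ≤ F.card) : ¬ C.sup Finset.card ≤ 1 := by
  have : F.card ≤ C.sup Finset.card := Finset.le_sup (f := Finset.card) hF
  omega

lemma vd_le_edist (hndeg : ¬ C.sup Finset.card ≤ 1) (hw : v ∈ S) :
    vdistSets C {u} S ≤ (skeleton C).edist u v := by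
  rw [vd_ndeg hndeg]
  exact iInf_le_of_le v (by simp [hw])

lemma vd_attained (hndeg : ¬ C.sup Finset.card ≤ 1) (hS : S.Nonempty) :
    ∃ w ∈ S, vdistSets C {u} S = (skeleton C).edist u w := by
  obtain ⟨w, hw, hmin⟩ := S.exists_min_image (fun w => (skeleton C).edist u w) hS
  refine ⟨w, hw, le_antisymm (vd_le_edist hndeg hw) ?_⟩
  rw [vd_ndeg hndeg]
  exact le_iInf₂ fun a ha => hmin a ha

/-- triangle-type inequality for vertices in a common facet. -/
lemma vd_triangle (hF : F ∈ C) (hu : u ∈ F) (hv : v ∈ F) :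
    vdistSets C {u} S ≤ vdistSets C {v} S + 1 := by
  by_cases huv : u = v
  · subst huv; exact le_self_add
  have h2 : 2 ≤ F.card := Finset.one_lt_card.2 ⟨u, hu, v, hv, huv⟩
  have hndeg := sup_card_ge hF h2
  by_cases hS : S.Nonempty
  · obtain ⟨w, hw, hvw⟩ := vd_attained (u := v) (S := S) hndeg hS
    have hadj : (skeleton C).Adj u v := ⟨huv, F, hF, hu, hv⟩
    calc vdistSets C {u} S ≤ (skeleton C).edist u w := vd_le_edist hndeg hw
    _ ≤ (skeleton C).edist u v + (skeleton C).edist v w := SimpleGraph.edist_triangle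
    _ ≤ 1 + (skeleton C).edist v w := by
        gcongr
        exact le_of_eq (SimpleGraph.edist_eq_one_iff_adj.2 hadj)
    _ = vdistSets C {v} S + 1 := by rw [hvw, add_comm]
  · have h1 : vdistSets C {u} S = ⊤ := by
      rw [vd_ndeg hndeg]
      simp [Finset.not_nonempty_iff_eq_empty.1 hS]
    have h2 : vdistSets C {v} S = ⊤ := by
      rw [vd_ndeg hndeg]
      simp [Finset.not_nonempty_iff_eq_empty.1 hS]
    rw [h1, h2]
    simp

lemma vd_eq_zero_iff (hS : S.Nonempty) :
    vdistSets C {u} S = 0 ↔ u ∈ S := by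
  by_cases h : C.sup Finset.card ≤ 1
  · rw [vdistSets_deg h, if_pos ⟨Finset.singleton_nonempty u, hS⟩]
    by_cases hus : u ∈ S
    · rw [if_pos (singleton_inter_nonempty.2 hus)]
      simp [hus]
    · rw [if_neg (fun hc => hus (singleton_inter_nonempty.1 hc))]
      simp [hus]
  · constructor
    · intro h0
      obtain ⟨w, hw, hmin⟩ := vd_attained (u := u) h hS
      rw [h0] at hmin
      have h1 : (skeleton C).edist u w = 0 := hmin.symm
      rw [SimpleGraph.edist_eq_zero_iff] at h1
      rwa [h1]
    · intro hu
      refine le_antisymm ?_ zero_le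
      rw [vd_ndeg h]
      exact iInf_le_of_le u (by simp [hu, SimpleGraph.edist_self])

lemma vd_eq_zero_of_mem (hu : u ∈ S) : vdistSets C {u} S = 0 :=
  (vd_eq_zero_iff ⟨u, hu⟩).2 hu

lemma vdist_eq_zero_of_meets (hu : u ∈ F) (hus : u ∈ S) : vdistSets C F S = 0 :=
  le_antisymm (le_trans (vdist_le_single hu) (le_of_eq (vd_eq_zero_of_mem hus)))
    zero_le

lemma vd_pos_of_not_mem (hS : S.Nonempty) (hu : u ∉ S) : 1 ≤ vdistSets C {u} S := by
  rcases eq_or_lt_of_le ((zero_le : (0:ℕ∞) ≤ vdistSets C {u} S)) with h | h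
  · exact absurd ((vd_eq_zero_iff hS).1 h.symm) hu
  · exact Order.add_one_le_of_lt h

/-- along a dual path of facets of cardinality ≥ 2, facet distance grows by at most 1. -/
lemma vdist_adj_le (hF : F ∈ C) (hG : G ∈ C) (h : AdjFacets F G) (h2 : 2 ≤ F.card) :
    vdistSets C F S ≤ vdistSets C G S + 1 := by
  have hint : (F ∩ G).Nonempty := by
    have := h.2.2; rw [← Finset.card_pos]; omega
  obtain ⟨a, ha⟩ := hint
  rw [Finset.mem_inter] at ha
  obtain ⟨w, hw, hweq⟩ := vdist_exists (S := S) (C := C) ⟨a, ha.2⟩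
  calc vdistSets C F S ≤ vdistSets C {a} S := vdist_le_single ha.1
  _ ≤ vdistSets C {w} S + 1 := vd_triangle hG ha.2 hw
  _ = vdistSets C G S + 1 := by rw [hweq]

/-- distances along a dual path ending at `S` are finite. -/
lemma vdist_ne_top_along (Γ : List (Finset V)) (hmem : ∀ F ∈ Γ, F ∈ C)
    (hchain : Γ.Chain' AdjFacets) (h2 : ∀ F ∈ Γ, 2 ≤ F.card)
    (hlast : ∀ F ∈ Γ.getLast?, (F ∩ S).Nonempty) :
    ∀ F ∈ Γ, vdistSets C F S ≠ ⊤ := by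
  induction Γ with
  | nil => intro F hF; simp at hF
  | cons A t ih =>
    rcases t with _ | ⟨B, t'⟩
    · intro F' hF'
      rw [List.mem_singleton] at hF'
      subst hF'
      obtain ⟨u, hu⟩ := hlast F' (by simp)
      rw [Finset.mem_inter] at hu
      rw [vdist_eq_zero_of_meets hu.1 hu.2]
      simp
    · have hchain' : (B :: t').Chain' AdjFacets := hchain.tail
      have ihv := ih (fun F hF => hmem F (List.mem_cons_of_mem _ hF)) hchain'
        (fun F hF => h2 F (List.mem_cons_of_mem _ hF))
        (by rw [List.getLast?_cons_cons] at hlast; exact hlast)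
      intro F' hF'
      rcases List.mem_cons.1 hF' with rfl | hF'
      · have hadj : AdjFacets F' B := List.isChain_cons_cons.1 hchain |>.1
        have hB : vdistSets C B S ≠ ⊤ := ihv B (by simp)
        have hle := vdist_adj_le (S := S) (hmem F' (by simp)) (hmem B (by simp))
          hadj (h2 F' (by simp))
        intro htop
        rw [htop] at hle
        have h3 : vdistSets C B S + 1 = ⊤ := top_le_iff.1 hle
        rcases WithTop.add_eq_top.1 h3 with h4 | h4
        · exact hB h4
        · exact absurd h4 ENat.one_ne_top
      · exact ihv F' hF'

/-! #### targetSet and admissibility -/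

lemma targetSet_of_not_mem (hx : x ∉ S) :
    targetSet C x S = (verts (link C x)).filter
      (fun w => vdistSets C {w} S + 1 = vdistSets C {x} S) := if_neg hx

lemma admissible_cons_iff {l : List V} :
    Admissible C (x :: l) S ↔
      vdistSets C {x} S = vdistSets C (x :: l).toFinset S ∧
      Admissible (link C x) l (targetSet C x S) := Iff.rfl

lemma distVector_cons (l : List V) :
    distVector C (x :: l) S
      = vdistSets C {x} S :: distVector (link C x) l (targetSet C x S) := rfl

/-- existence of admissible orderings. -/
lemma admissible_exists :
    ∀ (n : ℕ) (F : Finset V) (C : Finset (Finset V)) (S : Finset V), F.card ≤ n →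
      ∃ l : List V, l.Nodup ∧ l.toFinset = F ∧ Admissible C l S := by
  intro n
  induction n with
  | zero =>
    intro F C S hF
    have : F = ∅ := Finset.card_eq_zero.1 (le_antisymm hF zero_le)
    exact ⟨[], by simp [this, Admissible]⟩
  | succ n ih =>
    intro F C S hF
    by_cases hFe : F.Nonempty
    · obtain ⟨u, hu, humin⟩ := vdist_exists (C := C) (S := S) hFe
      obtain ⟨l, hnd, htf, hadm⟩ := ih (F.erase u) (link C u) (targetSet C u S)
        (by rw [Finset.card_erase_of_mem hu]; omega)
      refine ⟨u :: l, ?_, ?_, ?_⟩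
      · exact List.nodup_cons.2 ⟨by rw [← List.mem_toFinset, htf]; simp, hnd⟩
      · rw [List.toFinset_cons, htf, Finset.insert_erase hu]
      · refine ⟨?_, hadm⟩
        rw [List.toFinset_cons, htf, Finset.insert_erase hu, humin]
    · have : F = ∅ := Finset.not_nonempty_iff_eq_empty.1 hFe
      exact ⟨[], by simp [this, Admissible]⟩

/-- existence of admissible orderings with a prescribed distance-minimizing head. -/
lemma admissible_exists_head (hu : u ∈ F)
    (hmin : vdistSets C {u} S = vdistSets C F S) :
    ∃ l : List V, (u :: l).Nodup ∧ (u :: l).toFinset = F ∧ Admissible C (u :: l) S := by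
  obtain ⟨l, hnd, htf, hadm⟩ := admissible_exists (F.erase u).card (F.erase u)
    (link C u) (targetSet C u S) le_rfl
  refine ⟨l, ?_, ?_, ?_, hadm⟩
  · exact List.nodup_cons.2 ⟨by rw [← List.mem_toFinset, htf]; simp, hnd⟩
  · rw [List.toFinset_cons, htf, Finset.insert_erase hu]
  · rw [List.toFinset_cons, htf, Finset.insert_erase hu, hmin]

/-- the head of an admissible ordering realizes the facet distance. -/
lemma admissible_head {l : List V} (h : Admissible C (u :: l) S) :
    vdistSets C {u} S = vdistSets C (u :: l).toFinset S := h.1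

/-! #### stepIndex lemmas -/

lemma exists_getElem?_ne {l m : List V} (h : l.toFinset ≠ m.toFinset) :
    ∃ k : ℕ, l[k]? ≠ m[k]? := by
  by_contra hc
  push_neg at hc
  exact h (by rw [List.ext_getElem? hc])

lemma stepIndex_cons {a : V} {l m : List V} (h : ∃ k : ℕ, l[k]? ≠ m[k]?) :
    stepIndex (a :: l) (a :: m) = stepIndex l m + 1 := by
  unfold stepIndex
  have hA : {k : ℕ | (a :: l)[k]? ≠ (a :: m)[k]?} = Nat.succ '' {k : ℕ | l[k]? ≠ m[k]?} := by
    ext k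
    cases k with
    | zero => simp
    | succ j => simp [List.getElem?_cons_succ, Nat.succ_eq_add_one]
  rw [hA]
  have hne : {k : ℕ | l[k]? ≠ m[k]?}.Nonempty := h
  have h1 : sInf {k : ℕ | l[k]? ≠ m[k]?} ∈ {k : ℕ | l[k]? ≠ m[k]?} := Nat.sInf_mem hne
  have h2 : (Nat.succ '' {k : ℕ | l[k]? ≠ m[k]?}).Nonempty := hne.image _
  have h3 : sInf (Nat.succ '' {k : ℕ | l[k]? ≠ m[k]?})
      ∈ Nat.succ '' {k : ℕ | l[k]? ≠ m[k]?} := Nat.sInf_mem h2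
  obtain ⟨j, hj, hjeq⟩ := h3
  have hle : sInf (Nat.succ '' {k : ℕ | l[k]? ≠ m[k]?}) ≤ Nat.succ (sInf {k : ℕ | l[k]? ≠ m[k]?}) :=
    Nat.sInf_le ⟨_, h1, rfl⟩
  have hge : sInf {k : ℕ | l[k]? ≠ m[k]?} ≤ j := Nat.sInf_le hj
  omega

lemma stepIndex_zero_of_head_ne {l m : List V} (h : l[0]? ≠ m[0]?) :
    stepIndex l m = 0 :=
  Nat.sInf_eq_zero.2 (Or.inl h)

lemma head_eq_of_stepIndex_pos {l m : List V} (h : 1 ≤ stepIndex l m) :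
    l[0]? = m[0]? := by
  by_contra hc
  rw [stepIndex_zero_of_head_ne hc] at h
  omega

/-! #### Lex lemmas -/

lemma lex_head_le {a b : ℕ∞} {s t : List ℕ∞}
    (h : List.Lex (· < ·) (a :: s) (b :: t)) : a ≤ b := by
  cases h with
  | cons h => exact le_rfl
  | rel h => exact le_of_lt h


lemma getLast?_append_right {α : Type*} {l l' : List α} (h : l' ≠ []) :
    (l ++ l').getLast? = l'.getLast? := by
  rw [List.getLast?_append]
  have : l'.getLast?.isSome := List.getLast?_isSome.2 h
  cases hl : l'.getLast? with
  | none => rw [hl] at this; simp at this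
  | some a => simp

lemma chain'_imp_mem {α : Type*} {R R' : α → α → Prop} :
    ∀ {l : List α}, (∀ a ∈ l, ∀ b ∈ l, R a b → R' a b) → l.Chain' R → l.Chain' R' := by
  intro l
  induction l with
  | nil => intro _ _; exact List.isChain_nil
  | cons a t ih =>
    intro h hc
    cases t with
    | nil => exact List.isChain_singleton a
    | cons b t' =>
      rw [List.Chain', List.isChain_cons_cons] at hc ⊢
      exact ⟨h a (by simp) b (by simp) hc.1,
        ih (fun x hx y hy => h x (by simp [hx]) y (by simp [hy])) hc.2⟩

lemma mem_dropLast_getElem {α : Type*} :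
    ∀ (l : List α) (F : α), F ∈ l.dropLast → ∃ i : ℕ, i + 1 < l.length ∧ l[i]? = some F := by
  intro l
  induction l with
  | nil => intro F hF; simp at hF
  | cons a t ih =>
    intro F hF
    cases t with
    | nil => simp at hF
    | cons b t' =>
      rw [List.dropLast_cons₂, List.mem_cons] at hF
      rcases hF with rfl | hF
      · exact ⟨0, by simp, rfl⟩
      · obtain ⟨i, hi, hget⟩ := ih F hF
        exact ⟨i + 1, by simp at hi ⊢; omega, by simpa using hget⟩

lemma combSeg_ne_nil {Γ : List (Finset V)} {x₀ : V} (h : CombSeg C Γ S x₀) : Γ ≠ [] := by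
  cases h <;> simp

lemma combSeg_head_mem {Γ : List (Finset V)} {x₀ : V} (h : CombSeg C Γ S x₀) :
    ∃ F, Γ.head? = some F ∧ x₀ ∈ F := by
  cases h with
  | intersects C F S x₀ hF hx hFS => exact ⟨F, rfl, hx⟩
  | dimOne C S x₀ v hdim h₁ h₂ hx hv => exact ⟨{x₀}, rfl, Finset.mem_singleton_self x₀⟩
  | step C F₀ Γ₁ Γ₂ Fk S x₀ y x₀' ℓ hdim hmem hdisj hℓ hbefore hafter hy hyd hyuniq
      hx₀ hx₀k hlink htail =>
    exact ⟨F₀, rfl, hx₀ F₀ (by simp)⟩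

lemma combSeg_last_meets {Γ : List (Finset V)} {x₀ : V} (h : CombSeg C Γ S x₀) :
    ∀ F ∈ Γ.getLast?, (F ∩ S).Nonempty := by
  induction h with
  | intersects C F S x₀ hF hx hFS =>
    intro G hG; simp at hG; subst hG; exact hFS
  | dimOne C S x₀ v hdim h₁ h₂ hx hv =>
    intro G hG; simp at hG; subst hG
    exact ⟨v, Finset.mem_inter.2 ⟨Finset.mem_singleton_self v, hv⟩⟩
  | step C F₀ Γ₁ Γ₂ Fk S x₀ y x₀' ℓ hdim hmem hdisj hℓ hbefore hafter hy hyd hyuniq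
      hx₀ hx₀k hlink htail ihlink ihtail =>
    intro G hG
    rw [getLast?_append_right (by simp)] at hG
    exact ihtail G hG

lemma consPath_tail {Γ' : List (List V)} {L : List V}
    (h : ConservativePath C S (L :: Γ')) : ConservativePath C S Γ' := by
  obtain ⟨hh, hc⟩ := h
  cases Γ' with
  | nil => exact ⟨by simp, List.isChain_nil⟩
  | cons M t =>
    rw [List.Chain', List.isChain_cons_cons] at hc
    refine ⟨?_, hc.2⟩
    intro L' hL'
    simp at hL'
    subst hL'
    exact hc.1.2.1

lemma consPath_admissible {Γ' : List (List V)} (h : ConservativePath C S Γ') :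
    ∀ L ∈ Γ', Admissible C L S := by
  induction Γ' with
  | nil => intro L hL; simp at hL
  | cons L t ih =>
    intro L' hL'
    rcases List.mem_cons.1 hL' with rfl | hL'
    · exact h.1 L' rfl
    · exact ih (consPath_tail h) L' hL'

/-- maximizer of the step index among admissible reorderings. -/
lemma exists_max_admissible (Lref l₀ : List V) (hadm : Admissible C l₀ S) :
    ∃ m : List V, m.Perm l₀ ∧ Admissible C m S ∧
      ∀ m', m'.Perm l₀ → Admissible C m' S → stepIndex Lref m' ≤ stepIndex Lref m := by
  set P : Finset (List V) :=
    (l₀.permutations.filter (fun m => decide (Admissible C m S))).toFinset with hP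
  have hmemP : ∀ m : List V, m ∈ P ↔ (m.Perm l₀ ∧ Admissible C m S) := by
    intro m
    rw [hP, List.mem_toFinset, List.mem_filter, List.mem_permutations,
      decide_eq_true_eq]
  have hne : P.Nonempty := ⟨l₀, (hmemP l₀).2 ⟨List.Perm.refl l₀, hadm⟩⟩
  obtain ⟨m, hm, hmax⟩ := P.exists_max_image (fun m => stepIndex Lref m) hne
  rw [hmemP] at hm
  exact ⟨m, hm.1, hm.2, fun m' h1 h2 => hmax m' ((hmemP m').2 ⟨h1, h2⟩)⟩

lemma nodup_toFinset_length {l : List V} (h : l.Nodup) : l.toFinset.card = l.length :=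
  List.toFinset_card_of_nodup h

lemma list_eq_singleton_of_toFinset {l : List V} {a : V} (hnd : l.Nodup)
    (h : l.toFinset = {a}) : l = [a] := by
  have h1 : l.length = 1 := by
    rw [← nodup_toFinset_length hnd, h, Finset.card_singleton]
  obtain ⟨b, rfl⟩ := List.length_eq_one_iff.1 h1
  simp at h
  rw [h]

lemma head_mem_toFinset {l : List V} {a : V} (h : l.head? = some a) :
    a ∈ l.toFinset :=
  List.mem_toFinset.2 (List.mem_of_mem_head? h)

lemma cons_toFinset_eq {l : List V} {F : Finset V} (hx : x ∈ F)
    (hl : l.toFinset = F.erase x) : (x :: l).toFinset = F := by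
  rw [List.toFinset_cons, hl, Finset.insert_erase hx]

lemma tail_toFinset_eq {l : List V} {F : Finset V} (hnd : (x :: l).Nodup)
    (hl : (x :: l).toFinset = F) : l.toFinset = F.erase x := by
  rw [← hl, List.toFinset_cons, Finset.erase_insert]
  rw [List.nodup_cons] at hnd
  rw [List.mem_toFinset]
  exact hnd.1


lemma exists_getLast? {α : Type*} {l : List α} (h : l ≠ []) :
    ∃ a, l.getLast? = some a :=
  ⟨l.getLast h, List.getLast?_eq_getLast h⟩

lemma perm_toFinset {l l' : List V} (h : l.Perm l') : l.toFinset = l'.toFinset := by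
  ext a; simp [List.mem_toFinset, h.mem_iff]

lemma enat_succ_ne_self {a : ℕ∞} (h : a ≠ ⊤) : a + 1 ≠ a := by
  lift a to ℕ using h
  intro hc
  have : (a : ℕ) + 1 = a := by exact_mod_cast hc
  omega

lemma enat_lt_of_succ_eq {a b : ℕ∞} (h : a + 1 = b) (hb : b ≠ ⊤) : a < b := by
  have ha : a ≠ ⊤ := by rintro rfl; rw [← h] at hb; simp at hb
  lift a to ℕ using ha; lift b to ℕ using hb
  have h2 : (a : ℕ) + 1 = b := by exact_mod_cast h
  have h3 : (a : ℕ) < b := by omega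
  exact_mod_cast h3

lemma cons_sdiff_cons {at' bt : Finset V} {r : V} (hxa : x ∉ at')
    (hrd : at' \ bt = {r}) : (insert x at') \ (insert x bt) = {r} := by
  have hr : r ∈ at' ∧ r ∉ bt := by
    have : r ∈ at' \ bt := hrd ▸ Finset.mem_singleton_self r
    exact Finset.mem_sdiff.1 this
  ext z
  simp only [Finset.mem_sdiff, Finset.mem_insert, Finset.mem_singleton, not_or]
  constructor
  · rintro ⟨hz1 | hz1, hz2, hz3⟩
    · exact absurd hz1 hz2
    · have : z ∈ at' \ bt := Finset.mem_sdiff.2 ⟨hz1, hz3⟩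
      rw [hrd, Finset.mem_singleton] at this
      exact this
  · rintro rfl
    exact ⟨Or.inr hr.1, fun hc => hxa (hc ▸ hr.1), hr.2⟩

lemma sdiff_erase_eq {F G : Finset V} (hxG : x ∈ G) :
    F.erase x \ G.erase x = F \ G := by
  ext z
  simp only [Finset.mem_sdiff, Finset.mem_erase, not_and]
  constructor
  · rintro ⟨⟨hz1, hz2⟩, hz3⟩
    exact ⟨hz2, fun hc => (hz3 hz1) hc⟩
  · rintro ⟨hz1, hz2⟩
    have hzx : z ≠ x := fun hc => hz2 (hc ▸ hxG)
    exact ⟨⟨hzx, hz1⟩, fun _ hc => hz2 hc⟩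

lemma getLast?_cons_of_ne_nil {α : Type*} {a : α} {l : List α} (h : l ≠ []) :
    (a :: l).getLast? = l.getLast? := by
  rw [show a :: l = [a] ++ l from rfl, getLast?_append_right h]

end Aux

/-- In a conservative path, as long as the facet distance stays equal to the distance
of the head vertex of the first ordering, all orderings start with that vertex. -/
lemma heads_forced {C : Finset (Finset V)} {S : Finset V} {d : ℕ} {x₀ : V} {ℓ : ℕ∞}
    (hpure : Pure C d) (hd2 : 2 ≤ d)
    (hvdx0 : vdistSets C {x₀} S = ℓ) :
    ∀ (Q : List (List V)) (L : List V),
      List.Chain' (ConservativeStep C S) (L :: Q) →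
      (∀ M ∈ L :: Q, Admissible C M S) →
      (∀ M ∈ L :: Q, ¬ vdistSets C M.toFinset S < ℓ) →
      (∀ M ∈ L :: Q, M.Nodup) →
      (∀ M ∈ L :: Q, M.toFinset ∈ C) →
      L.head? = some x₀ →
      ∀ M ∈ L :: Q, M.head? = some x₀ := by
  intro Q
  induction Q with
  | nil =>
    intro L _ _ _ _ _ hL M hM
    simp at hM
    subst hM
    exact hL
  | cons M Q' ih =>
    intro L hchain hadm hlt hnd hmemC hL
    have hstep : ConservativeStep C S L M := (List.isChain_cons_cons.1 hchain).1
    obtain ⟨⟨r, hrl, hrd⟩, hadmM, hmax⟩ := hstep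
    cases L with
    | nil => simp at hL
    | cons z lt =>
    have hz : z = x₀ := by simpa using hL
    subst hz
    have hndL := hnd _ (List.mem_cons_self)
    have hlen : (z :: lt).length = d := by
      rw [← nodup_toFinset_length hndL, hpure _ (hmemC _ (List.mem_cons_self))]
    have hltne : lt ≠ [] := by
      intro h
      rw [h] at hlen
      simp at hlen
      omega
    have hrlt : r ∈ lt := by
      rw [getLast?_cons_of_ne_nil hltne] at hrl
      exact List.mem_of_mem_getLast? (by simp [hrl])
    have hx0lt : z ∉ lt := (List.nodup_cons.1 hndL).1
    have hrx : r ≠ z := fun hc => hx0lt (hc ▸ hrlt)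
    have hx0L : z ∈ (z :: lt).toFinset := by simp
    have hx0M : z ∈ M.toFinset := mem_of_sdiff_singleton hrd hx0L (Ne.symm hrx)
    have hvM : vdistSets C M.toFinset S = ℓ := by
      refine le_antisymm ?_ (le_of_not_gt (hlt M (by simp)))
      exact hvdx0 ▸ vdist_le_single hx0M
    obtain ⟨t, hndt, htf, hadmt⟩ := admissible_exists_head hx0M (by rw [hvdx0, hvM])
    have hperm : (z :: t).Perm M :=
      List.perm_of_nodup_nodup_toFinset_eq hndt (hnd M (by simp)) htf
    have hne1 : lt.toFinset ≠ t.toFinset := by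
      intro hc
      have h1 : (z :: lt).toFinset = M.toFinset := by
        rw [← htf, List.toFinset_cons, List.toFinset_cons, hc]
      have h2 : r ∈ (z :: lt).toFinset \ M.toFinset := hrd ▸ Finset.mem_singleton_self r
      rw [h1] at h2
      simp at h2
    have h1 := hmax (z :: t) hperm hadmt
    rw [stepIndex_cons (exists_getElem?_ne hne1)] at h1
    have h2 : 1 ≤ stepIndex (z :: lt) M := by omega
    have h3 := head_eq_of_stepIndex_pos h2
    have hMhead : M.head? = some z := by
      cases M with
      | nil => simp at hx0M
      | cons w mt =>
        have h4 : z = w := by simpa using h3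
        rw [← h4]
        rfl
    intro N hN
    rcases List.mem_cons.1 hN with rfl | hN'
    · exact hL
    · exact ih M hchain.tail
        (fun N' hN' => hadm N' (List.mem_cons_of_mem _ hN'))
        (fun N' hN' => hlt N' (List.mem_cons_of_mem _ hN'))
        (fun N' hN' => hnd N' (List.mem_cons_of_mem _ hN'))
        (fun N' hN' => hmemC N' (List.mem_cons_of_mem _ hN'))
        hMhead N hN'

/-! ### The forward direction: combinatorial segments are monotone conservative paths -/

lemma fwd (n : ℕ) : ∀ (d : ℕ) (C : Finset (Finset V)) (S : Finset V)
    (Γ : List (Finset V)) (x₀ : V),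
    d + Γ.length ≤ n → Pure C d → (∀ F ∈ Γ, F ∈ C) → Γ.Chain' AdjFacets →
    (∀ F ∈ Γ.dropLast, F ∩ S = ∅) → (∀ F ∈ Γ.getLast?, (F ∩ S).Nonempty) →
    CombSeg C Γ S x₀ →
    ∃ Γ' : List (List V), Γ'.map List.toFinset = Γ ∧ (∀ L ∈ Γ', L.Nodup) ∧
      MonotonePath C S Γ' ∧ ConservativePath C S Γ' := by
  induction n with
  | zero =>
    intro d C S Γ x₀ hn _ _ _ _ _ hseg
    have h0 : Γ.length = 0 := by omega
    rw [List.length_eq_zero_iff] at h0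
    exact absurd h0 (combSeg_ne_nil hseg)
  | succ n ih =>
    intro d C S Γ x₀ hn hpure hmem hchain hdrop hlast hseg
    cases hseg with
    | intersects C F S x₀ hF hx hFS =>
      obtain ⟨l, hnd, htf, hadm⟩ := admissible_exists F.card F C S le_rfl
      refine ⟨[l], by simp [htf], by simp [hnd], List.isChain_singleton l, ?_, List.isChain_singleton l⟩
      intro L hL
      simp at hL
      subst hL
      exact hadm
    | dimOne C S x₀ v hdim h₁ h₂ hx hv =>
      have hxv : x₀ ≠ v := fun hc => hx (hc ▸ hv)
      have hadm1 : Admissible C [x₀] S := by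
        refine ⟨?_, trivial⟩
        have he : ([x₀] : List V).toFinset = {x₀} := by simp
        rw [he]
      have hadm2 : Admissible C [v] S := by
        refine ⟨?_, trivial⟩
        have he : ([v] : List V).toFinset = {v} := by simp
        rw [he]
      refine ⟨[[x₀], [v]], by simp, by simp, ?_, ?_, ?_⟩
      · -- monotone
        refine List.isChain_pair.2 ?_
        have e1 : distVector C [v] S = [vdistSets C {v} S] := rfl
        have e2 : distVector C [x₀] S = [vdistSets C {x₀} S] := rfl
        rw [e1, e2]
        refine List.Lex.rel ?_
        rw [vd_eq_zero_of_mem hv]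
        exact lt_of_lt_of_le zero_lt_one (vd_pos_of_not_mem ⟨v, hv⟩ hx)
      · -- conservative head
        intro L hL
        simp at hL
        subst hL
        exact hadm1
      · -- conservative chain
        refine List.isChain_pair.2 ⟨⟨x₀, by simp, ?_⟩, hadm2, ?_⟩
        · have : ([x₀] : List V).toFinset \ ([v] : List V).toFinset = {x₀} \ {v} := by simp
          rw [this]
          ext z
          simp only [Finset.mem_sdiff, Finset.mem_singleton]
          constructor
          · rintro ⟨rfl, _⟩; rfl
          · rintro rfl; exact ⟨rfl, hxv⟩
        · intro M' hperm _
          rw [List.perm_singleton.1 hperm]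
    | step C F₀ Γ₁ Γ₂ Fk S x₀ y xl ℓ hdim cmem cdisj chl cbefore cafter chy chyd
        chyuniq chx chxk clink ctail =>
      -- notation
      have hFkmem : Fk ∈ (F₀ :: Γ₁) ++ Fk :: Γ₂ := List.mem_append.2 (Or.inr (by simp))
      have hFkC : Fk ∈ C := hmem Fk hFkmem
      have hF0C : F₀ ∈ C := cmem F₀ (by simp)
      have hd2 : 2 ≤ d := by rw [← hpure F₀ hF0C]; exact hdim F₀ hF0C
      have hΓne : (F₀ :: Γ₁) ++ Fk :: Γ₂ ≠ [] := by simp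
      obtain ⟨Gl, hGl⟩ := exists_getLast? hΓne
      have hSne : S.Nonempty := by
        obtain ⟨u, hu⟩ := hlast Gl hGl
        exact ⟨u, (Finset.mem_inter.1 hu).2⟩
      have hvdne : ∀ F ∈ (F₀ :: Γ₁) ++ Fk :: Γ₂, vdistSets C F S ≠ ⊤ :=
        vdist_ne_top_along _ hmem hchain (fun F hF => hdim F (hmem F hF)) hlast
      have hlne : ℓ ≠ ⊤ := by rw [← chl]; exact hvdne F₀ (by simp)
      have hx0F0 : x₀ ∈ F₀ := chx F₀ (by simp)
      have hx0nS : x₀ ∉ S := by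
        intro hc
        have h1 : x₀ ∈ F₀ ∩ S := Finset.mem_inter.2 ⟨hx0F0, hc⟩
        rw [cdisj F₀ (by simp)] at h1
        simp at h1
      have hvdx0 : vdistSets C {x₀} S = ℓ := by
        refine le_antisymm ?_ (chl ▸ vdist_le_single hx0F0)
        calc vdistSets C {x₀} S ≤ vdistSets C {y} S + 1 := vd_triangle hFkC chxk chy
        _ = ℓ := chyd
      have hyne : y ≠ x₀ := by
        intro h
        rw [h, hvdx0] at chyd
        exact enat_succ_ne_self hlne chyd
      have htgt : targetSet C x₀ S
          = (verts (link C x₀)).filter (fun w => vdistSets C {w} S + 1 = ℓ) := by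
        rw [targetSet_of_not_mem hx0nS, hvdx0]
      have hyT : y ∈ (verts (link C x₀)).filter (fun w => vdistSets C {w} S + 1 = ℓ) :=
        Finset.mem_filter.2 ⟨mem_verts.2 ⟨Fk.erase x₀, erase_mem_link hFkC chxk,
          Finset.mem_erase.2 ⟨hyne, chy⟩⟩, chyd⟩
      have hvP : ∀ F ∈ F₀ :: Γ₁, vdistSets C F S = ℓ := by
        intro F hF
        refine le_antisymm ?_ (le_of_not_gt (cbefore F hF))
        calc vdistSets C F S ≤ vdistSets C {x₀} S := vdist_le_single (chx F hF)
        _ = ℓ := hvdx0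
      have hPT : ∀ F ∈ F₀ :: Γ₁,
          (F.erase x₀) ∩ ((verts (link C x₀)).filter
            (fun w => vdistSets C {w} S + 1 = ℓ)) = ∅ := by
        intro F hF
        rw [Finset.eq_empty_iff_forall_notMem]
        intro w hw
        obtain ⟨hw1, hw2⟩ := Finset.mem_inter.1 hw
        have h1 : vdistSets C {w} S + 1 = ℓ := (Finset.mem_filter.1 hw2).2
        have h2 : ℓ ≤ vdistSets C {w} S :=
          hvP F hF ▸ vdist_le_single (Finset.mem_erase.1 hw1).2
        exact absurd (enat_lt_of_succ_eq h1 hlne) (not_lt.2 h2)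
      -- the prefix including Fk and membership facts
      have hxall : ∀ F ∈ (F₀ :: Γ₁) ++ [Fk], x₀ ∈ F := by
        intro F hF
        rcases List.mem_append.1 hF with h | h
        · exact chx F h
        · simp at h; subst h; exact chxk
      have hmemPF : ∀ F ∈ (F₀ :: Γ₁) ++ [Fk], F ∈ C := by
        intro F hF
        rcases List.mem_append.1 hF with h | h
        · exact cmem F h
        · simp at h; subst h; exact hFkC
      have hchainsplit := List.isChain_append.1 hchain
      have hchainP : ((F₀ :: Γ₁) ++ [Fk]).Chain' AdjFacets := by
        refine List.isChain_append.2 ⟨hchainsplit.1, List.isChain_singleton Fk, ?_⟩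
        intro a ha b hb
        simp at hb
        subst hb
        exact hchainsplit.2.2 a ha Fk rfl
      have hPE : ((F₀ :: Γ₁) ++ [Fk]).map (fun F => F.erase x₀)
          = ((F₀ :: Γ₁).map (fun F => F.erase x₀)) ++ [Fk.erase x₀] := by
        rw [List.map_append]
        rfl
      have hchainPE : (((F₀ :: Γ₁) ++ [Fk]).map (fun F => F.erase x₀)).Chain' AdjFacets := by
        rw [List.Chain', List.isChain_map]
        exact chain'_imp_mem
          (fun a ha b hb hab => adjFacets_erase hab (hxall a ha) (hxall b hb)) hchainP
      -- apply IH in the link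
      have hlenP : (d - 1) + (((F₀ :: Γ₁) ++ [Fk]).map (fun F => F.erase x₀)).length ≤ n := by
        have h1 : (((F₀ :: Γ₁) ++ [Fk]).map (fun F => F.erase x₀)).length
            = Γ₁.length + 2 := by
          simp only [List.length_map, List.length_append, List.length_cons,
            List.length_nil]
        have h2 : ((F₀ :: Γ₁) ++ Fk :: Γ₂).length = Γ₁.length + Γ₂.length + 2 := by
          simp only [List.length_append, List.length_cons]
          omega
        omega
      obtain ⟨Λ, hΛmap, hΛnd, hΛmono, hΛcons⟩ := ih (d-1) (link C x₀)
        ((verts (link C x₀)).filter (fun w => vdistSets C {w} S + 1 = ℓ))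
        (((F₀ :: Γ₁) ++ [Fk]).map (fun F => F.erase x₀)) xl
        hlenP (link_pure hpure x₀)
        (by
          intro G hG
          obtain ⟨F, hF, rfl⟩ := List.mem_map.1 hG
          exact erase_mem_link (hmemPF F hF) (hxall F hF))
        hchainPE
        (by
          intro G hG
          rw [hPE, List.dropLast_concat] at hG
          obtain ⟨F, hF, rfl⟩ := List.mem_map.1 hG
          exact hPT F hF)
        (by
          intro G hG
          rw [hPE, List.getLast?_concat] at hG
          simp at hG
          subst hG
          exact ⟨y, Finset.mem_inter.2 ⟨Finset.mem_erase.2 ⟨hyne, chy⟩, hyT⟩⟩)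
        clink
      -- apply IH on the suffix
      have hlenQ : d + (Fk :: Γ₂).length ≤ n := by
        have h2 : ((F₀ :: Γ₁) ++ Fk :: Γ₂).length = Γ₁.length + Γ₂.length + 2 := by
          simp only [List.length_append, List.length_cons]
          omega
        have h3 : (Fk :: Γ₂).length = Γ₂.length + 1 := by simp
        omega
      obtain ⟨Δ, hΔmap, hΔnd, hΔmono, hΔcons⟩ := ih d C S (Fk :: Γ₂) y
        hlenQ hpure
        (fun F hF => hmem F (List.mem_append.2 (Or.inr hF)))
        hchainsplit.2.1
        (by
          intro F hF
          refine hdrop F ?_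
          rw [List.dropLast_append_of_ne_nil (by simp)]
          exact List.mem_append.2 (Or.inr hF))
        (by
          intro F hF
          refine hlast F ?_
          rwa [getLast?_append_right (by simp)])
        ctail
      -- decompose Λ
      have hΛlen : Λ.length = Γ₁.length + 2 := by
        have := congrArg List.length hΛmap
        simpa using this
      have hΛne : Λ ≠ [] := by intro h; rw [h] at hΛlen; simp at hΛlen
      have hΛdne : Λ.dropLast ≠ [] := by
        intro h
        have := congrArg List.length h
        simp [List.length_dropLast, hΛlen] at this
      have hmapΛd : Λ.dropLast.map List.toFinset
          = (F₀ :: Γ₁).map (fun F => F.erase x₀) := by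
        have h1 : (Λ.map List.toFinset).dropLast
            = (((F₀ :: Γ₁) ++ [Fk]).map (fun F => F.erase x₀)).dropLast := by rw [hΛmap]
        rw [hPE, List.dropLast_concat] at h1
        rw [← h1, List.map_dropLast]
      have hΛdel : ∀ l ∈ Λ.dropLast, ∃ F ∈ F₀ :: Γ₁, l.toFinset = F.erase x₀ := by
        intro l hl
        have h1 : l.toFinset ∈ (F₀ :: Γ₁).map (fun F => F.erase x₀) :=
          hmapΛd ▸ List.mem_map_of_mem hl
        obtain ⟨F, hF, he⟩ := List.mem_map.1 h1
        exact ⟨F, hF, he.symm⟩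
      have hΛdmem : ∀ l ∈ Λ.dropLast, l ∈ Λ := fun l hl => (List.dropLast_sublist Λ).mem hl
      have hx0notin : ∀ l ∈ Λ.dropLast, x₀ ∉ l.toFinset := by
        intro l hl hc
        obtain ⟨F, hF, he⟩ := hΛdel l hl
        rw [he] at hc
        simp at hc
      have hΛadm : ∀ l ∈ Λ, Admissible (link C x₀) l
          ((verts (link C x₀)).filter (fun w => vdistSets C {w} S + 1 = ℓ)) :=
        consPath_admissible hΛcons
      have hdva : ∀ l : List V, distVector C (x₀ :: l) S
          = ℓ :: distVector (link C x₀) l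
            ((verts (link C x₀)).filter (fun w => vdistSets C {w} S + 1 = ℓ)) := by
        intro l
        rw [distVector_cons, hvdx0, htgt]
      -- decompose Δ
      cases Δ with
      | nil => simp at hΔmap
      | cons M₀ Δt =>
      rw [List.map_cons] at hΔmap
      have hM0 : M₀.toFinset = Fk := by
        injection hΔmap with h1 h2
      have hΔmapt : Δt.map List.toFinset = Γ₂ := by
        injection hΔmap with h1 h2
      have hM0adm : Admissible C M₀ S := consPath_admissible hΔcons M₀ (by simp)
      have hM0ne : M₀ ≠ [] := by
        intro h
        rw [h] at hM0
        have h1 := hpure Fk hFkC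
        rw [← hM0] at h1
        simp at h1
        omega
      -- the head vertex of any admissible ordering of Fk is not x₀
      have hheadFk : ∀ (z : V) (t : List V), (z :: t).toFinset = Fk →
          Admissible C (z :: t) S →
          vdistSets C {z} S = vdistSets C Fk S ∧ z ≠ x₀ := by
        intro z t hM' hadm'
        have h1 : vdistSets C {z} S = vdistSets C Fk S := by
          rw [admissible_head hadm', hM']
        refine ⟨h1, ?_⟩
        intro hc
        subst hc
        rw [hvdx0] at h1
        exact absurd (h1 ▸ cafter) (lt_irrefl ℓ)
      -- the assembled path
      refine ⟨(Λ.dropLast.map (fun l => x₀ :: l)) ++ M₀ :: Δt, ?_, ?_, ?_, ?_⟩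
      · -- map toFinset
        have e1 : (Λ.dropLast.map (fun l => x₀ :: l)).map List.toFinset = F₀ :: Γ₁ := by
          rw [List.map_map]
          have h1 : ∀ l ∈ Λ.dropLast,
              (List.toFinset ∘ fun l => x₀ :: l) l = insert x₀ l.toFinset := by
            intro l _; simp
          rw [List.map_congr_left h1]
          have h2 : Λ.dropLast.map (fun l => insert x₀ l.toFinset)
              = (Λ.dropLast.map List.toFinset).map (fun t => insert x₀ t) := by
            rw [List.map_map]; rfl
          rw [h2, hmapΛd, List.map_map]
          have h3 : ∀ F ∈ F₀ :: Γ₁,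
              ((fun t => insert x₀ t) ∘ fun F => F.erase x₀) F = F := by
            intro F hF
            simp only [Function.comp_apply]
            exact Finset.insert_erase (chx F hF)
          rw [List.map_congr_left h3]
          simp
        rw [List.map_append, e1, List.map_cons, hM0, hΔmapt]
      · -- nodup
        intro L hL
        rcases List.mem_append.1 hL with h | h
        · obtain ⟨l, hl, rfl⟩ := List.mem_map.1 h
          exact List.nodup_cons.2 ⟨fun hc => hx0notin l hl (List.mem_toFinset.2 hc),
            hΛnd l (hΛdmem l hl)⟩
        · exact hΔnd L h
      · -- monotone
        refine List.isChain_append.2 ⟨?_, hΔmono, ?_⟩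
        · rw [List.isChain_map]
          refine List.IsChain.imp ?_ (List.IsChain.prefix hΛmono (List.dropLast_prefix Λ))
          intro a b hab
          rw [hdva a, hdva b]
          exact List.Lex.cons hab
        · intro La hLa Mb hMb
          simp only [List.head?_cons, Option.mem_some_iff] at hMb
          subst hMb
          rw [List.getLast?_map] at hLa
          rw [List.getLast?_eq_getLast hΛdne] at hLa
          simp only [Option.map_some, Option.mem_some_iff] at hLa
          subst hLa
          cases hM0h : M₀ with
          | nil => exact absurd hM0h hM0ne
          | cons z t =>
            rw [hM0h] at hM0 hM0adm
            have hz := hheadFk z t hM0 hM0adm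
            rw [distVector_cons, hdva]
            refine List.Lex.rel ?_
            rw [hz.1]
            exact cafter
      · -- conservative
        constructor
        · intro L hL
          rw [List.head?_append_of_ne_nil _ (by
            simp only [ne_eq, List.map_eq_nil_iff]
            exact hΛdne)] at hL
          rw [List.head?_map] at hL
          obtain ⟨l₀, hl₀⟩ := exists_getLast? (l := Λ.dropLast.reverse) (by simp [hΛdne])
          cases hΛdh : Λ.dropLast with
          | nil => exact absurd hΛdh hΛdne
          | cons la Λd' =>
            rw [hΛdh] at hL
            simp only [List.head?_cons, Option.map_some, Option.mem_some_iff] at hL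
            subst hL
            have hlaF0 : la.toFinset = F₀.erase x₀ := by
              have h1 := congrArg List.head? hmapΛd
              rw [hΛdh] at h1
              simp at h1
              exact h1
            refine ⟨?_, ?_⟩
            · rw [cons_toFinset_eq hx0F0 hlaF0, hvdx0, chl]
            · rw [htgt]
              exact hΛadm la (hΛdmem la (by rw [hΛdh]; simp))
        · refine List.isChain_append.2 ⟨?_, hΔcons.2, ?_⟩
          · -- steps within the prefix
            rw [List.isChain_map]
            refine chain'_imp_mem ?_ (List.IsChain.prefix hΛcons.2 (List.dropLast_prefix Λ))
            intro a ha b hb hab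
            obtain ⟨⟨r, hra, hrd⟩, hadmb, hmaxb⟩ := hab
            obtain ⟨Fa, hFa, hta⟩ := hΛdel a ha
            obtain ⟨Fb, hFb, htb⟩ := hΛdel b hb
            have hane : a ≠ [] := by intro h; rw [h] at hra; simp at hra
            have hxFb : x₀ ∈ Fb := chx Fb hFb
            have hrmem : r ∈ a.toFinset := by
              have : r ∈ a.toFinset \ b.toFinset := hrd ▸ Finset.mem_singleton_self r
              exact (Finset.mem_sdiff.1 this).1
            have habne : a.toFinset ≠ b.toFinset := by
              intro h
              have : r ∈ a.toFinset \ b.toFinset := hrd ▸ Finset.mem_singleton_self r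
              rw [h] at this
              simp at this
            refine ⟨⟨r, ?_, ?_⟩, ?_, ?_⟩
            · rw [getLast?_cons_of_ne_nil hane]
              exact hra
            · rw [List.toFinset_cons, List.toFinset_cons]
              exact cons_sdiff_cons (hx0notin a ha) hrd
            · refine ⟨?_, ?_⟩
              · rw [cons_toFinset_eq hxFb htb, hvP Fb hFb, hvdx0]
              · rw [htgt]; exact hadmb
            · intro M' hperm hadm'
              rw [stepIndex_cons (exists_getElem?_ne habne)]
              cases M' with
              | nil =>
                have := hperm.length_eq
                simp at this
              | cons z t =>
                by_cases hz : x₀ = z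
                · subst hz
                  have htper : t.Perm b := hperm.cons_inv
                  have hadm't : Admissible (link C x₀) t
                      ((verts (link C x₀)).filter
                        (fun w => vdistSets C {w} S + 1 = ℓ)) := by
                    rw [← htgt]; exact hadm'.2
                  have h1 := hmaxb t htper hadm't
                  have htne : ∃ k : ℕ, a[k]? ≠ t[k]? :=
                    exists_getElem?_ne (by rw [perm_toFinset htper]; exact habne)
                  rw [stepIndex_cons htne]
                  omega
                · have h0 : stepIndex (x₀ :: a) (z :: t) = 0 :=
                    stepIndex_zero_of_head_ne (by
                      simp only [List.getElem?_cons_zero]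
                      exact fun hc => hz (Option.some.inj hc))
                  rw [h0]
                  exact Nat.zero_le _
          · -- the junction step
            intro La hLa Mb hMb
            simp only [List.head?_cons, Option.mem_some_iff] at hMb
            subst hMb
            rw [List.getLast?_map, List.getLast?_eq_getLast hΛdne] at hLa
            simp only [Option.map_some, Option.mem_some_iff] at hLa
            subst hLa
            -- the final facet of the prefix
            set ll := Λ.dropLast.getLast hΛdne with hlldef
            have hllmem : ll ∈ Λ.dropLast := List.getLast_mem hΛdne
            obtain ⟨Fl, hFl, htl⟩ := hΛdel ll hllmem
            have hxFl : x₀ ∈ Fl := chx Fl hFl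
            -- the final step of Λ is conservative
            have hΛlastt : (Λ.getLast hΛne).toFinset = Fk.erase x₀ := by
              have h1 : Option.map List.toFinset Λ.getLast? = some (Fk.erase x₀) := by
                rw [← List.getLast?_map, hΛmap, hPE, List.getLast?_concat]
              rw [List.getLast?_eq_getLast hΛne] at h1
              simp at h1
              exact h1
            have hΛstep : ConservativeStep (link C x₀)
                ((verts (link C x₀)).filter (fun w => vdistSets C {w} S + 1 = ℓ))
                ll (Λ.getLast hΛne) := by
              have h := hΛcons.2
              conv at h => rw [← List.dropLast_append_getLast hΛne]
              rw [List.Chain', List.isChain_append] at h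
              exact h.2.2 ll (by
                rw [List.getLast?_eq_getLast hΛdne]
                exact Option.mem_some_iff.2 hlldef.symm) _ (by simp)
            obtain ⟨⟨r, hra, hrd⟩, _, _⟩ := hΛstep
            have hllne : ll ≠ [] := by intro h; rw [h] at hra; simp at hra
            refine ⟨⟨r, ?_, ?_⟩, hM0adm, ?_⟩
            · rw [getLast?_cons_of_ne_nil hllne]
              exact hra
            · rw [cons_toFinset_eq hxFl htl, hM0]
              rw [htl, hΛlastt, sdiff_erase_eq chxk] at hrd
              -- hrd : Fl \ Fk = {r}; goal Fl \ Fk = {r}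
              exact hrd
            · intro M' hperm hadm'
              have hM'f : M'.toFinset = Fk := by rw [perm_toFinset hperm, hM0]
              cases M' with
              | nil =>
                have h1 := hperm.length_eq
                simp only [List.length_nil] at h1
                exact absurd (List.length_eq_zero_iff.1 h1.symm) hM0ne
              | cons z t =>
                have hz := hheadFk z t hM'f hadm'
                have h0 : stepIndex (x₀ :: ll) (z :: t) = 0 :=
                  stepIndex_zero_of_head_ne (by
                    simp only [List.getElem?_cons_zero]
                    exact fun hc => hz.2 (Option.some.inj hc).symm)
                rw [h0]
                exact Nat.zero_le _

lemma pred_head_dropWhile {α : Type*} (p : α → Bool) {l : List α} {a : α} {t : List α}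
    (h : l.dropWhile p = a :: t) : p a = false := by
  induction l with
  | nil => simp at h
  | cons b l' ih =>
    rw [List.dropWhile_cons] at h
    by_cases hb : p b = true
    · rw [if_pos hb] at h
      exact ih h
    · rw [if_neg hb] at h
      injection h with h1 h2
      subst h1
      simpa using hb

/-! ### The backward direction: monotone conservative paths are combinatorial segments -/

lemma bwd (n : ℕ) : ∀ (d : ℕ) (C : Finset (Finset V)) (S : Finset V)
    (Γ' : List (List V)),
    d + Γ'.length ≤ n → Pure C d →
    (∀ F ∈ Γ'.map List.toFinset, F ∈ C) → (Γ'.map List.toFinset).Chain' AdjFacets →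
    (∀ F ∈ (Γ'.map List.toFinset).dropLast, F ∩ S = ∅) →
    (∀ F ∈ (Γ'.map List.toFinset).getLast?, (F ∩ S).Nonempty) →
    (∀ L ∈ Γ', L.Nodup) →
    MonotonePath C S Γ' → ConservativePath C S Γ' →
    ∀ L₀ ∈ Γ'.head?, ∀ x₀ ∈ L₀.head?, CombSeg C (Γ'.map List.toFinset) S x₀ := by
  induction n with
  | zero =>
    intro d C S Γ' hn _ _ _ _ _ _ _ _ L₀ hL₀
    have h0 : Γ' = [] := by
      have : Γ'.length = 0 := by omega
      rwa [List.length_eq_zero_iff] at this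
    subst h0
    simp at hL₀
  | succ n ih =>
    intro d C S Γ' hn hpure hmem hchain hdrop hlast hnd hmono hcons L₀ hL₀ x₀ hx₀
    cases Γ' with
    | nil => simp at hL₀
    | cons L0 Γt =>
    have hL0eq : L0 = L₀ := by simpa using hL₀
    subst hL0eq
    obtain ⟨l0t, hL0s⟩ : ∃ t, L0 = x₀ :: t := by
      cases L0 with
      | nil => simp at hx₀
      | cons z t =>
        have hz : z = x₀ := by simpa using hx₀
        exact ⟨t, by rw [hz]⟩
    subst hL0s
    have hadmall : ∀ L ∈ (x₀ :: l0t) :: Γt, Admissible C L S := consPath_admissible hcons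
    have hF0C : (x₀ :: l0t).toFinset ∈ C := hmem _ (by simp)
    cases Γt with
    | nil =>
      -- single facet, it meets S
      refine CombSeg.intersects C _ S x₀ hF0C (by simp) ?_
      exact hlast _ (by simp)
    | cons L1 Γr =>
    obtain ⟨ℓ, hℓ⟩ : ∃ l, vdistSets C ((x₀ :: l0t).toFinset) S = l := ⟨_, rfl⟩
    have hvdx0 : vdistSets C {x₀} S = ℓ := by
      rw [admissible_head (hadmall (x₀ :: l0t) (by simp)), hℓ]
    have hdd : (x₀ :: l0t).toFinset.card = d := hpure _ hF0C
    have hadj01 : AdjFacets (x₀ :: l0t).toFinset L1.toFinset := by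
      have h := hchain
      rw [List.Chain', List.map_cons, List.map_cons, List.isChain_cons_cons] at h
      exact h.1
    have hd1 : 1 ≤ d := by
      have := hadj01.2.2
      omega
    have hSne : S.Nonempty := by
      obtain ⟨G, hG⟩ := exists_getLast? (l := ((x₀ :: l0t) :: L1 :: Γr).map List.toFinset)
        (by simp)
      obtain ⟨u, hu⟩ := hlast G hG
      exact ⟨u, (Finset.mem_inter.1 hu).2⟩
    have hF0S : (x₀ :: l0t).toFinset ∩ S = ∅ := by
      refine hdrop _ ?_
      rw [List.map_cons, List.map_cons, List.dropLast_cons₂]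
      simp
    have hx0nS : x₀ ∉ S := by
      intro hc
      have h1 : x₀ ∈ (x₀ :: l0t).toFinset ∩ S := Finset.mem_inter.2 ⟨by simp, hc⟩
      rw [hF0S] at h1
      simp at h1
    rcases lt_or_ge d 2 with hd2' | hd2
    · -- dimension 0 : d = 1
      have hd1e : d = 1 := by omega
      have hl0 : l0t = [] := by
        have h1 : (x₀ :: l0t).length = 1 := by
          rw [← nodup_toFinset_length (hnd _ (by simp)), hdd, hd1e]
        simpa using h1
      subst hl0
      obtain ⟨v, hv1⟩ : ∃ v, L1.toFinset = {v} :=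
        Finset.card_eq_one.1 (by rw [hpure _ (hmem _ (by simp)), hd1e])
      have hL1v : L1 = [v] := list_eq_singleton_of_toFinset (hnd _ (by simp)) hv1
      have lexlt0 : ∀ a b : ℕ∞, List.Lex (· < ·) [a] [b] → a < b := by
        intro a b h
        cases h with
        | rel h => exact h
        | cons h => cases h
      have lexlt : ∀ a b : V, List.Lex (· < ·) (distVector C [a] S) (distVector C [b] S) →
          vdistSets C {a} S < vdistSets C {b} S := by
        intro a b h
        exact lexlt0 _ _ h
      cases Γr with
      | cons L2 Γr2 =>
        exfalso
        obtain ⟨v2, hv2⟩ : ∃ v2, L2.toFinset = {v2} :=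
          Finset.card_eq_one.1 (by rw [hpure _ (hmem _ (by simp)), hd1e])
        have hL2v : L2 = [v2] := list_eq_singleton_of_toFinset (hnd _ (by simp)) hv2
        have hmono1 := (List.isChain_cons_cons.1 hmono).1
        have hmono2 := (List.isChain_cons_cons.1 (List.isChain_cons_cons.1 hmono).2).1
        rw [hL1v] at hmono1 hmono2
        rw [hL2v] at hmono2
        have h1 := lexlt _ _ hmono1
        have h2 := lexlt _ _ hmono2
        have h3 : 1 ≤ vdistSets C {v} S := by
          have h4 : (0 : ℕ∞) ≤ vdistSets C {v2} S := zero_le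
          exact Order.add_one_le_of_lt (lt_of_le_of_lt h4 h2)
        have hsup : C.sup Finset.card ≤ 1 :=
          Finset.sup_le (fun F hF => le_of_eq (by rw [hpure F hF, hd1e]))
        have h5 : vdistSets C {x₀} S ≤ 1 := by
          rw [vd_deg_val hsup hSne]
          split_ifs <;> norm_num
        exact absurd (lt_of_le_of_lt h3 h1) (not_lt.2 h5)
      | nil =>
        have hvS : v ∈ S := by
          obtain ⟨u, hu⟩ := hlast L1.toFinset (by
            rw [List.map_cons, List.map_cons, List.map_nil]
            rfl)
          rw [hv1] at hu
          obtain ⟨hu1, hu2⟩ := Finset.mem_inter.1 hu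
          rw [Finset.mem_singleton] at hu1
          exact hu1 ▸ hu2
        have hx0e : (x₀ :: ([] : List V)).toFinset = {x₀} := by simp
        rw [List.map_cons, List.map_cons, List.map_nil, hx0e, hv1]
        exact CombSeg.dimOne C S x₀ v
          (fun F hF => by rw [hpure F hF, hd1e])
          (hx0e ▸ hF0C) (hv1 ▸ hmem L1.toFinset (by simp)) hx0nS hvS
    · -- main case : d ≥ 2
      have hdim : ∀ F ∈ C, 2 ≤ F.card := fun F hF => by rw [hpure F hF]; exact hd2
      have hvdne : ∀ F ∈ ((x₀ :: l0t) :: L1 :: Γr).map List.toFinset,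
          vdistSets C F S ≠ ⊤ :=
        vdist_ne_top_along _ hmem hchain (fun F hF => hdim F (hmem F hF)) hlast
      have hlne : ℓ ≠ ⊤ := by rw [← hℓ]; exact hvdne _ (by simp)
      have hl1 : 1 ≤ ℓ := by
        rw [← hℓ]
        obtain ⟨u, hu, hueq⟩ := vdist_exists (C := C) (S := S)
          (T := (x₀ :: l0t).toFinset) ⟨x₀, by simp⟩
        rw [← hueq]
        refine vd_pos_of_not_mem hSne ?_
        intro hc
        have h1 : u ∈ (x₀ :: l0t).toFinset ∩ S := Finset.mem_inter.2 ⟨hu, hc⟩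
        rw [hF0S] at h1
        simp at h1
      -- split the path at the first facet closer to S
      set pred : List V → Bool := fun L => decide (¬ vdistSets C L.toFinset S < ℓ)
        with hpreddef
      have hpredT : ∀ L : List V, pred L = true ↔ ¬ vdistSets C L.toFinset S < ℓ := by
        intro L
        rw [hpreddef]
        exact decide_eq_true_iff
      have hpredF : ∀ L : List V, pred L = false ↔ vdistSets C L.toFinset S < ℓ := by
        intro L
        rw [hpreddef]
        rw [decide_eq_false_iff_not]
        exact not_not
      have hpredL0 : pred (x₀ :: l0t) = true := (hpredT _).2 (by rw [hℓ]; exact lt_irrefl ℓ)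
      have hRne : ((x₀ :: l0t) :: L1 :: Γr).dropWhile pred ≠ [] := by
        intro h
        rw [List.dropWhile_eq_nil_iff] at h
        obtain ⟨Ll, hLl⟩ := exists_getLast? (l := (x₀ :: l0t) :: L1 :: Γr) (by simp)
        have hLlmem : Ll ∈ (x₀ :: l0t) :: L1 :: Γr :=
          List.mem_of_mem_getLast? (by simp [hLl])
        have h2 := (hpredT Ll).1 (h Ll hLlmem)
        have h3 : (((x₀ :: l0t) :: L1 :: Γr).map List.toFinset).getLast?
            = some Ll.toFinset := by
          rw [List.getLast?_map, hLl]
          rfl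
        obtain ⟨u, hu⟩ := hlast Ll.toFinset (by rw [h3]; rfl)
        rw [Finset.mem_inter] at hu
        have h4 : vdistSets C Ll.toFinset S = 0 := vdist_eq_zero_of_meets hu.1 hu.2
        exact h2 (by rw [h4]; exact lt_of_lt_of_le zero_lt_one hl1)
      obtain ⟨M₀, R'', hR⟩ : ∃ M₀ R'', ((x₀ :: l0t) :: L1 :: Γr).dropWhile pred
          = M₀ :: R'' := by
        cases hq : ((x₀ :: l0t) :: L1 :: Γr).dropWhile pred with
        | nil => exact absurd hq hRne
        | cons a b => exact ⟨a, b, rfl⟩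
      have hpredM0 : pred M₀ = false := pred_head_dropWhile pred hR
      have hMlt : vdistSets C M₀.toFinset S < ℓ := (hpredF M₀).1 hpredM0
      have hsplit : (x₀ :: l0t) :: L1 :: Γr
          = ((x₀ :: l0t) :: (L1 :: Γr).takeWhile pred) ++ M₀ :: R'' := by
        rw [← List.takeWhile_cons_of_pos hpredL0, ← hR]
        exact (List.takeWhile_append_dropWhile (p := pred)).symm
      rw [hsplit] at hmem hchain hdrop hlast hnd hmono hcons hadmall ⊢
      have hL0mem : (x₀ :: l0t) ∈ ((x₀ :: l0t) :: (L1 :: Γr).takeWhile pred) ++ M₀ :: R'' := by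
        simp
      -- facts about the prefix
      have hP'pred : ∀ L ∈ (x₀ :: l0t) :: (L1 :: Γr).takeWhile pred,
          ¬ vdistSets C L.toFinset S < ℓ := by
        intro L hL
        rcases List.mem_cons.1 hL with rfl | hL'
        · exact (hpredT _).1 hpredL0
        · exact (hpredT L).1 (List.mem_takeWhile_imp hL')
      have hP'sub : ∀ L ∈ (x₀ :: l0t) :: (L1 :: Γr).takeWhile pred,
          L ∈ ((x₀ :: l0t) :: (L1 :: Γr).takeWhile pred) ++ M₀ :: R'' :=
        fun L hL => List.mem_append.2 (Or.inl hL)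
      have hmemC' : ∀ L ∈ ((x₀ :: l0t) :: (L1 :: Γr).takeWhile pred) ++ M₀ :: R'',
          L.toFinset ∈ C := fun L hL => hmem _ (List.mem_map_of_mem hL)
      have hchainP' : List.Chain' (ConservativeStep C S)
          ((x₀ :: l0t) :: (L1 :: Γr).takeWhile pred) :=
        hcons.2.prefix (List.prefix_append _ _)
      have hheads : ∀ L ∈ (x₀ :: l0t) :: (L1 :: Γr).takeWhile pred,
          L.head? = some x₀ := by
        refine heads_forced hpure hd2 hvdx0 _ _ hchainP' ?_ ?_ ?_ ?_ rfl
        · exact fun M hM => hadmall M (hP'sub M hM)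
        · exact hP'pred
        · exact fun M hM => hnd M (hP'sub M hM)
        · exact fun M hM => hmemC' M (hP'sub M hM)
      have hvP : ∀ L ∈ (x₀ :: l0t) :: (L1 :: Γr).takeWhile pred,
          vdistSets C L.toFinset S = ℓ := by
        intro L hL
        refine le_antisymm ?_ (le_of_not_gt (hP'pred L hL))
        calc vdistSets C L.toFinset S ≤ vdistSets C {x₀} S :=
          vdist_le_single (head_mem_toFinset (hheads L hL))
        _ = ℓ := hvdx0
      have hconsP : ∀ L ∈ (x₀ :: l0t) :: (L1 :: Γr).takeWhile pred,
          ∃ lt, L = x₀ :: lt := by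
        intro L hL
        have hh := hheads L hL
        cases L with
        | nil => simp at hh
        | cons w t => exact ⟨t, by rw [show w = x₀ by simpa using hh]⟩
      have hlend : ∀ L ∈ ((x₀ :: l0t) :: (L1 :: Γr).takeWhile pred) ++ M₀ :: R'',
          L.length = d := by
        intro L hL
        rw [← nodup_toFinset_length (hnd L hL), hpure _ (hmemC' L hL)]
      -- the last ordering of the prefix and the junction step
      obtain ⟨Ll, hLl⟩ := exists_getLast?
        (l := (x₀ :: l0t) :: (L1 :: Γr).takeWhile pred) (by simp)
      have hLlmem : Ll ∈ (x₀ :: l0t) :: (L1 :: Γr).takeWhile pred :=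
        List.mem_of_mem_getLast? (by simp [hLl])
      obtain ⟨llt, hLleq⟩ := hconsP Ll hLlmem
      subst hLleq
      have hjstep : ConservativeStep C S (x₀ :: llt) M₀ := by
        have h := hcons.2
        rw [List.Chain', List.isChain_append] at h
        exact h.2.2 _ hLl M₀ rfl
      obtain ⟨⟨r, hrl, hrd⟩, hadmM0, hmaxM0⟩ := hjstep
      have hndLl := hnd _ (hP'sub _ hLlmem)
      have hlltne : llt ≠ [] := by
        intro h
        have := hlend _ (hP'sub _ hLlmem)
        rw [h] at this
        simp at this
        omega
      have hrllt : r ∈ llt := by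
        rw [getLast?_cons_of_ne_nil hlltne] at hrl
        exact List.mem_of_mem_getLast? (by simp [hrl])
      have hrx : r ≠ x₀ := by
        intro hc
        exact (List.nodup_cons.1 hndLl).1 (hc ▸ hrllt)
      have hx0M0 : x₀ ∈ M₀.toFinset :=
        mem_of_sdiff_singleton hrd (by simp) (Ne.symm hrx)
      -- M₀ = y :: m0t
      obtain ⟨y, m0t, hM0s⟩ : ∃ y m0t, M₀ = y :: m0t := by
        cases M₀ with
        | nil => simp at hx0M0
        | cons a b => exact ⟨a, b, rfl⟩
      subst hM0s
      have hM0mem : (y :: m0t) ∈ ((x₀ :: l0t) :: (L1 :: Γr).takeWhile pred) ++ (y :: m0t) :: R'' := by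
        simp
      have hFkC : (y :: m0t).toFinset ∈ C := hmemC' _ hM0mem
      have hvdy : vdistSets C {y} S = vdistSets C (y :: m0t).toFinset S :=
        admissible_head hadmM0
      have hylt : vdistSets C {y} S < ℓ := by rw [hvdy]; exact hMlt
      have hyne : y ≠ x₀ := by
        intro hc
        rw [hc, hvdx0] at hylt
        exact lt_irrefl ℓ hylt
      have hyd : vdistSets C {y} S + 1 = ℓ := by
        refine le_antisymm (Order.add_one_le_of_lt hylt) ?_
        calc ℓ = vdistSets C {x₀} S := hvdx0.symm
        _ ≤ vdistSets C {y} S + 1 := vd_triangle hFkC hx0M0 (by simp)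
      -- Fl and adjacency at the junction
      have hvFl : vdistSets C (x₀ :: llt).toFinset S = ℓ := hvP _ hLlmem
      have hadjFlFk : AdjFacets (x₀ :: llt).toFinset (y :: m0t).toFinset := by
        have h := hchain
        rw [List.Chain', List.map_append, List.isChain_append] at h
        refine h.2.2 _ ?_ _ (by rw [List.map_cons]; exact Option.mem_some_iff.2 rfl)
        rw [List.getLast?_map, hLl]
        rfl
      have hyuniq : ∀ z ∈ (y :: m0t).toFinset, vdistSets C {z} S + 1 = ℓ → z = y := by
        obtain ⟨w, hw⟩ := adjFacets_sdiff (adjFacets_symm hadjFlFk)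
        have key : ∀ z ∈ (y :: m0t).toFinset, vdistSets C {z} S < ℓ → z = w := by
          intro z hz hzlt
          have hznFl : z ∉ (x₀ :: llt).toFinset := by
            intro hc
            have := hvFl ▸ vdist_le_single hc
            exact absurd hzlt (not_lt.2 this)
          have : z ∈ (y :: m0t).toFinset \ (x₀ :: llt).toFinset :=
            Finset.mem_sdiff.2 ⟨hz, hznFl⟩
          rw [hw, Finset.mem_singleton] at this
          exact this
        intro z hz hzd
        rw [key z hz (enat_lt_of_succ_eq hzd hlne), ← key y (by simp) hylt]
      -- target set in the link
      have htgt : targetSet C x₀ S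
          = (verts (link C x₀)).filter (fun w => vdistSets C {w} S + 1 = ℓ) := by
        rw [targetSet_of_not_mem hx0nS, hvdx0]
      have hyT : y ∈ (verts (link C x₀)).filter (fun w => vdistSets C {w} S + 1 = ℓ) :=
        Finset.mem_filter.2 ⟨mem_verts.2 ⟨(y :: m0t).toFinset.erase x₀,
          erase_mem_link hFkC hx0M0, Finset.mem_erase.2 ⟨hyne, by simp⟩⟩, hyd⟩
      have hx0all : ∀ L ∈ (x₀ :: l0t) :: (L1 :: Γr).takeWhile pred, x₀ ∈ L.toFinset :=
        fun L hL => head_mem_toFinset (hheads L hL)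
      have hPT : ∀ L ∈ (x₀ :: l0t) :: (L1 :: Γr).takeWhile pred,
          (L.toFinset.erase x₀) ∩ ((verts (link C x₀)).filter
            (fun w => vdistSets C {w} S + 1 = ℓ)) = ∅ := by
        intro L hL
        rw [Finset.eq_empty_iff_forall_notMem]
        intro w hw
        obtain ⟨hw1, hw2⟩ := Finset.mem_inter.1 hw
        have h1 : vdistSets C {w} S + 1 = ℓ := (Finset.mem_filter.1 hw2).2
        have h2 : ℓ ≤ vdistSets C {w} S :=
          hvP L hL ▸ vdist_le_single (Finset.mem_erase.1 hw1).2
        exact absurd (enat_lt_of_succ_eq h1 hlne) (not_lt.2 h2)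
      -- choose a maximizing admissible ordering of Fk.erase x₀ in the link
      obtain ⟨m₀, hm₀nd, hm₀tf, hm₀adm⟩ := admissible_exists
        ((y :: m0t).toFinset.erase x₀).card ((y :: m0t).toFinset.erase x₀)
        (link C x₀)
        ((verts (link C x₀)).filter (fun w => vdistSets C {w} S + 1 = ℓ)) le_rfl
      obtain ⟨m, hmperm, hmadm, hmmax⟩ := exists_max_admissible llt m₀ hm₀adm
      have hmtf : m.toFinset = (y :: m0t).toFinset.erase x₀ := by
        rw [perm_toFinset hmperm, hm₀tf]
      have hmnd : m.Nodup := hmperm.symm.nodup hm₀nd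
      -- tails facts
      have htails : ∀ L ∈ (x₀ :: l0t) :: (L1 :: Γr).takeWhile pred,
          L.tail.toFinset = L.toFinset.erase x₀ := by
        intro L hL
        have hndL := hnd L (hP'sub L hL)
        obtain ⟨lt, hLeq⟩ := hconsP L hL
        rw [hLeq]
        exact tail_toFinset_eq (hLeq ▸ hndL) rfl
      have hmapLink : ((((x₀ :: l0t) :: (L1 :: Γr).takeWhile pred).map List.tail)
            ++ [m]).map List.toFinset
          = ((((x₀ :: l0t) :: (L1 :: Γr).takeWhile pred).map List.toFinset).map
              (fun F => F.erase x₀)) ++ [(y :: m0t).toFinset.erase x₀] := by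
        rw [List.map_append, List.map_map, List.map_map]
        congr 1
        · refine List.map_congr_left ?_
          intro L hL
          simp only [Function.comp_apply]
          exact htails L hL
        · rw [List.map_cons, List.map_nil, hmtf]
      have hEr : ((((x₀ :: l0t) :: (L1 :: Γr).takeWhile pred).map List.toFinset)
            ++ [(y :: m0t).toFinset]).map (fun F => F.erase x₀)
          = (((x₀ :: l0t) :: (L1 :: Γr).takeWhile pred).map List.toFinset).map
              (fun F => F.erase x₀) ++ [(y :: m0t).toFinset.erase x₀] := by
        rw [List.map_append]
        rfl
      -- the dual path of the prefix with Fk appended, and its erased version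
      have hchainPFk : ((((x₀ :: l0t) :: (L1 :: Γr).takeWhile pred).map List.toFinset)
          ++ [(y :: m0t).toFinset]).Chain' AdjFacets := by
        have h := hchain
        rw [List.Chain', List.map_append, List.isChain_append] at h
        refine List.isChain_append.2 ⟨h.1, List.isChain_singleton _, ?_⟩
        intro a ha b hb
        rw [List.head?_cons, Option.mem_some_iff] at hb
        subst hb
        exact h.2.2 a ha _ (by rw [List.map_cons]; exact Option.mem_some_iff.2 rfl)
      have hxallP : ∀ F ∈ (((x₀ :: l0t) :: (L1 :: Γr).takeWhile pred).map List.toFinset)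
          ++ [(y :: m0t).toFinset], x₀ ∈ F := by
        intro F hF
        rcases List.mem_append.1 hF with h | h
        · obtain ⟨L, hL, rfl⟩ := List.mem_map.1 h
          exact hx0all L hL
        · rw [List.mem_singleton] at h
          subst h
          exact hx0M0
      have hmemPFk : ∀ F ∈ (((x₀ :: l0t) :: (L1 :: Γr).takeWhile pred).map List.toFinset)
          ++ [(y :: m0t).toFinset], F ∈ C := by
        intro F hF
        rcases List.mem_append.1 hF with h | h
        · obtain ⟨L, hL, rfl⟩ := List.mem_map.1 h
          exact hmemC' L (hP'sub L hL)
        · rw [List.mem_singleton] at h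
          subst h
          exact hFkC
      have hchainEr : (((((x₀ :: l0t) :: (L1 :: Γr).takeWhile pred).map List.toFinset)
          ++ [(y :: m0t).toFinset]).map (fun F => F.erase x₀)).Chain' AdjFacets := by
        rw [List.Chain', List.isChain_map]
        exact chain'_imp_mem
          (fun a ha b hb hab => adjFacets_erase hab (hxallP a ha) (hxallP b hb)) hchainPFk
      have hdva : ∀ l : List V, distVector C (x₀ :: l) S
          = ℓ :: distVector (link C x₀) l
            ((verts (link C x₀)).filter (fun w => vdistSets C {w} S + 1 = ℓ)) := by
        intro l
        rw [distVector_cons, hvdx0, htgt]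
      have hlltne2 : llt.toFinset = (x₀ :: llt).toFinset.erase x₀ :=
        tail_toFinset_eq hndLl rfl
      -- m is nonempty
      have hmne : m ≠ [] := by
        intro h
        rw [h] at hmtf
        have h1 : (y :: m0t).toFinset.erase x₀ = ∅ := hmtf.symm
        have h2 : y ∈ (y :: m0t).toFinset.erase x₀ := Finset.mem_erase.2 ⟨hyne, by simp⟩
        rw [h1] at h2
        simp at h2
      have hl0tne : l0t ≠ [] := by
        intro h
        have h1 := hlend _ hL0mem
        rw [h] at h1
        simp at h1
        omega
      -- monotone path in the link
      have hmonoLink : MonotonePath (link C x₀)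
          ((verts (link C x₀)).filter (fun w => vdistSets C {w} S + 1 = ℓ))
          ((((x₀ :: l0t) :: (L1 :: Γr).takeWhile pred).map List.tail) ++ [m]) := by
        refine List.isChain_append.2 ⟨?_, List.isChain_singleton _, ?_⟩
        · rw [List.isChain_map]
          refine chain'_imp_mem ?_ (hmono.prefix (List.prefix_append _ _))
          intro a ha b hb hab
          obtain ⟨lta, ha'⟩ := hconsP a ha
          obtain ⟨ltb, hb'⟩ := hconsP b hb
          subst ha'
          subst hb'
          simp only [List.tail_cons]
          rw [hdva, hdva] at hab
          exact List.lex_cons_iff.1 hab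
        · intro a ha b hb
          simp only [List.head?_cons, Option.mem_some_iff] at hb
          subst hb
          rw [List.getLast?_map, hLl] at ha
          simp only [Option.map_some, Option.mem_some_iff] at ha
          subst ha
          simp only [List.tail_cons]
          -- compare head distances in the link
          cases m with
          | nil => exact absurd rfl hmne
          | cons w0 mt0 =>
            cases hlltc : llt with
            | nil => exact absurd hlltc hlltne
            | cons w1 lt1 =>
              rw [distVector_cons, distVector_cons]
              refine List.Lex.rel ?_
              have h0 : vdistSets (link C x₀) {w0}
                  ((verts (link C x₀)).filter (fun w => vdistSets C {w} S + 1 = ℓ)) = 0 := by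
                rw [admissible_head hmadm, hmtf]
                exact vdist_eq_zero_of_meets (Finset.mem_erase.2 ⟨hyne, by simp⟩) hyT
              have hadmLl := (hadmall _ (hP'sub _ hLlmem)).2
              rw [htgt] at hadmLl
              have h1 : vdistSets (link C x₀) {w1}
                  ((verts (link C x₀)).filter (fun w => vdistSets C {w} S + 1 = ℓ))
                  = vdistSets (link C x₀) (w1 :: lt1).toFinset
                    ((verts (link C x₀)).filter (fun w => vdistSets C {w} S + 1 = ℓ)) := by
                rw [hlltc] at hadmLl
                exact admissible_head hadmLl
              have hw1mem : w1 ∈ (x₀ :: llt).toFinset.erase x₀ := by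
                rw [← hlltne2, hlltc]
                simp
              have hw1T : w1 ∉ (verts (link C x₀)).filter
                  (fun w => vdistSets C {w} S + 1 = ℓ) := by
                intro hc
                have h2 := hPT _ hLlmem
                have h3 : w1 ∈ (x₀ :: llt).toFinset.erase x₀ ∩
                    ((verts (link C x₀)).filter (fun w => vdistSets C {w} S + 1 = ℓ)) :=
                  Finset.mem_inter.2 ⟨hw1mem, hc⟩
                rw [h2] at h3
                simp at h3
              have h4 : 1 ≤ vdistSets (link C x₀) {w1}
                  ((verts (link C x₀)).filter (fun w => vdistSets C {w} S + 1 = ℓ)) :=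
                vd_pos_of_not_mem ⟨y, hyT⟩ hw1T
              rw [h0]
              exact lt_of_lt_of_le zero_lt_one h4
      -- conservative path in the link
      have hconsLink : ConservativePath (link C x₀)
          ((verts (link C x₀)).filter (fun w => vdistSets C {w} S + 1 = ℓ))
          ((((x₀ :: l0t) :: (L1 :: Γr).takeWhile pred).map List.tail) ++ [m]) := by
        constructor
        · intro L hL
          rw [List.head?_append_of_ne_nil _ (by simp)] at hL
          simp only [List.map_cons, List.head?_cons, Option.mem_some_iff] at hL
          subst hL
          have h1 := (hadmall _ hL0mem).2
          rw [htgt] at h1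
          exact h1
        · refine List.isChain_append.2 ⟨?_, List.isChain_singleton _, ?_⟩
          · rw [List.isChain_map]
            refine chain'_imp_mem ?_ (hcons.2.prefix (List.prefix_append _ _))
            intro a ha b hb hab
            obtain ⟨lta, ha'⟩ := hconsP a ha
            obtain ⟨ltb, hb'⟩ := hconsP b hb
            subst ha'
            subst hb'
            simp only [List.tail_cons]
            have hx0b : x₀ ∈ (x₀ :: ltb).toFinset := by simp
            obtain ⟨⟨r', hr'l, hr'd⟩, hadmb, hmaxb⟩ := hab
            have hltane : lta ≠ [] := by
              intro h
              have h1 := hlend _ (hP'sub _ ha)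
              rw [h] at h1
              simp at h1
              omega
            have hdiffab : lta.toFinset ≠ ltb.toFinset := by
              intro hc
              have h1 : (x₀ :: lta).toFinset = (x₀ :: ltb).toFinset := by
                rw [List.toFinset_cons, List.toFinset_cons, hc]
              have h2 : r' ∈ (x₀ :: lta).toFinset \ (x₀ :: ltb).toFinset :=
                hr'd ▸ Finset.mem_singleton_self r'
              rw [h1] at h2
              simp at h2
            have htaila : lta.toFinset = (x₀ :: lta).toFinset.erase x₀ :=
              tail_toFinset_eq (hnd _ (hP'sub _ ha)) rfl
            have htailb : ltb.toFinset = (x₀ :: ltb).toFinset.erase x₀ :=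
              tail_toFinset_eq (hnd _ (hP'sub _ hb)) rfl
            refine ⟨⟨r', ?_, ?_⟩, ?_, ?_⟩
            · rw [getLast?_cons_of_ne_nil hltane] at hr'l
              exact hr'l
            · rw [htaila, htailb, sdiff_erase_eq hx0b, hr'd]
            · have h1 := hadmb.2
              rw [htgt] at h1
              exact h1
            · intro m' hperm hadm'
              have hm'tf : m'.toFinset = ltb.toFinset := perm_toFinset hperm
              have hfull : Admissible C (x₀ :: m') S := by
                refine ⟨?_, by rw [htgt]; exact hadm'⟩
                have h1 : (x₀ :: m').toFinset = (x₀ :: ltb).toFinset := by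
                  rw [List.toFinset_cons, hm'tf, ← List.toFinset_cons]
                rw [h1, hvP _ hb, hvdx0]
              have h2 := hmaxb (x₀ :: m') (hperm.cons x₀) hfull
              rw [stepIndex_cons (exists_getElem?_ne hdiffab),
                stepIndex_cons (exists_getElem?_ne (hm'tf ▸ hdiffab))] at h2
              omega
          · intro a ha b hb
            simp only [List.head?_cons, Option.mem_some_iff] at hb
            subst hb
            rw [List.getLast?_map, hLl] at ha
            simp only [Option.map_some, Option.mem_some_iff] at ha
            subst ha
            simp only [List.tail_cons]
            refine ⟨⟨r, ?_, ?_⟩, hmadm, ?_⟩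
            · rw [getLast?_cons_of_ne_nil hlltne] at hrl
              exact hrl
            · rw [hlltne2, hmtf, sdiff_erase_eq hx0M0]
              exact hrd
            · exact fun m' hp ha' => hmmax m' (hp.trans hmperm) ha'
      -- sizes for the induction
      have hlensplit := congrArg List.length hsplit
      simp only [List.length_append, List.length_cons] at hlensplit hn
      -- the combinatorial segment in the link, via the induction hypothesis
      obtain ⟨xl, hxl⟩ := exists_getLast? (l := l0t.reverse) (by simpa using hl0tne)
      have hlinkC : CombSeg (link C x₀)
          (((((x₀ :: l0t) :: (L1 :: Γr).takeWhile pred).map List.toFinset)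
            ++ [(y :: m0t).toFinset]).map (fun F => F.erase x₀))
          ((verts (link C x₀)).filter (fun w => vdistSets C {w} S + 1 = ℓ))
          (l0t.head hl0tne) := by
        have h := ih (d - 1) (link C x₀)
          ((verts (link C x₀)).filter (fun w => vdistSets C {w} S + 1 = ℓ))
          ((((x₀ :: l0t) :: (L1 :: Γr).takeWhile pred).map List.tail) ++ [m])
          (by
            simp only [List.length_append, List.length_map, List.length_cons,
              List.length_nil]
            omega)
          (link_pure hpure x₀)
          (by
            intro F hF
            rw [hmapLink] at hF
            rcases List.mem_append.1 hF with h | h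
            · obtain ⟨G, hG, rfl⟩ := List.mem_map.1 h
              obtain ⟨L, hL, rfl⟩ := List.mem_map.1 hG
              exact erase_mem_link (hmemC' L (hP'sub L hL)) (hx0all L hL)
            · rw [List.mem_singleton] at h
              subst h
              exact erase_mem_link hFkC hx0M0)
          (by rw [hmapLink, ← hEr]; exact hchainEr)
          (by
            intro F hF
            rw [hmapLink, List.dropLast_concat] at hF
            obtain ⟨G, hG, rfl⟩ := List.mem_map.1 hF
            obtain ⟨L, hL, rfl⟩ := List.mem_map.1 hG
            exact hPT L hL)
          (by
            intro F hF
            rw [hmapLink, List.getLast?_concat] at hF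
            rw [Option.mem_some_iff] at hF
            subst hF
            exact ⟨y, Finset.mem_inter.2 ⟨Finset.mem_erase.2 ⟨hyne, by simp⟩, hyT⟩⟩)
          (by
            intro L hL
            rcases List.mem_append.1 hL with h | h
            · obtain ⟨L', hL', rfl⟩ := List.mem_map.1 h
              exact (hnd L' (hP'sub L' hL')).sublist (List.tail_sublist L')
            · rw [List.mem_singleton] at h
              subst h
              exact hmnd)
          hmonoLink hconsLink l0t
          (by
            rw [List.head?_append_of_ne_nil _ (by simp)]
            simp only [List.map_cons, List.head?_cons]
            exact Option.mem_some_iff.2 rfl)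
          (l0t.head hl0tne)
          (by
            rw [List.head?_eq_head hl0tne]
            exact Option.mem_some_iff.2 rfl)
        rw [hmapLink, ← hEr] at h
        exact h
      -- the combinatorial segment of the tail, via the induction hypothesis
      have htailC : CombSeg C (((y :: m0t) :: R'').map List.toFinset) S y := by
        refine ih d C S ((y :: m0t) :: R'')
          (by simp only [List.length_cons]; omega) hpure
          (fun F hF => hmem F (by
            rw [List.map_append]
            exact List.mem_append_right _ hF))
          (by
            have h := hchain
            rw [List.Chain', List.map_append, List.isChain_append] at h
            exact h.2.1)
          (by
            intro F hF
            refine hdrop F ?_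
            rw [List.map_append, List.dropLast_append_of_ne_nil (by simp)]
            exact List.mem_append_right _ hF)
          (by
            intro F hF
            refine hlast F ?_
            rwa [List.map_append, getLast?_append_right (by simp)])
          (fun L hL => hnd L (List.mem_append_right _ hL))
          (by
            have h := List.isChain_append.1 hmono
            exact h.2.1)
          (by
            refine ⟨?_, ?_⟩
            · intro L hL
              simp only [List.head?_cons, Option.mem_some_iff] at hL
              subst hL
              exact hadmM0
            · have h := hcons.2
              rw [List.Chain', List.isChain_append] at h
              exact h.2.1)
          (y :: m0t) (Option.mem_some_iff.2 rfl) y (Option.mem_some_iff.2 rfl)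
      -- assemble
      rw [List.map_append]
      refine CombSeg.step C ((x₀ :: l0t).toFinset)
        (((L1 :: Γr).takeWhile pred).map List.toFinset)
        (R''.map List.toFinset) ((y :: m0t).toFinset) S x₀ y (l0t.head hl0tne) ℓ
        hdim ?_ ?_ hℓ ?_ hMlt (by simp) hyd hyuniq ?_ hx0M0 ?_ htailC
      · intro F hF
        obtain ⟨L, hL, rfl⟩ := List.mem_map.1
          (show F ∈ ((x₀ :: l0t) :: (L1 :: Γr).takeWhile pred).map List.toFinset from hF)
        exact hmemC' L (hP'sub L hL)
      · intro F hF
        refine hdrop F ?_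
        rw [List.map_append, List.dropLast_append_of_ne_nil (by simp)]
        exact List.mem_append_left _
          (show F ∈ ((x₀ :: l0t) :: (L1 :: Γr).takeWhile pred).map List.toFinset from hF)
      · intro F hF
        obtain ⟨L, hL, rfl⟩ := List.mem_map.1
          (show F ∈ ((x₀ :: l0t) :: (L1 :: Γr).takeWhile pred).map List.toFinset from hF)
        exact hP'pred L hL
      · intro F hF
        obtain ⟨L, hL, rfl⟩ := List.mem_map.1
          (show F ∈ ((x₀ :: l0t) :: (L1 :: Γr).takeWhile pred).map List.toFinset from hF)
        exact hx0all L hL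
      · exact hlinkC
end MCP

open MCP in
/-- equivalence of combinatorial segments and monotone conservative
paths: a dual path whose last facet is the only one meeting `S` is a combinatorial
segment from its first facet to `S` (for some anchor in that facet) iff its facets can
be ordered so as to form a monotone conservative path towards `S`. -/
theorem statement4 {V : Type} [DecidableEq V] [Fintype V] (d : ℕ)
    (C : Finset (Finset V)) (hpure : Pure C d) (hnormal : Normal C)
    (S : Finset V) (hS : S.Nonempty) (hSv : S ⊆ verts C)
    (Γ : List (Finset V)) (hne : Γ ≠ []) (hdual : IsDualPath C Γ)
    (hlast : ∀ F ∈ Γ.getLast?, (F ∩ S).Nonempty)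
    (hothers : ∀ i : ℕ, i + 1 < Γ.length → ∀ F ∈ Γ[i]?, F ∩ S = ∅) :
    (∃ x₀ F₀, Γ.head? = some F₀ ∧ x₀ ∈ F₀ ∧ CombSeg C Γ S x₀) ↔
    (∃ Γ' : List (List V), Γ'.map List.toFinset = Γ ∧ (∀ L ∈ Γ', L.Nodup) ∧
      MonotonePath C S Γ' ∧ ConservativePath C S Γ') := by
  have hdrop : ∀ F ∈ Γ.dropLast, F ∩ S = ∅ := by
    intro F hF
    obtain ⟨i, hi, hget⟩ := mem_dropLast_getElem Γ F hF
    exact hothers i hi F (by rw [hget]; exact Option.mem_some_iff.2 rfl)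
  constructor
  · rintro ⟨x₀, F₀, hh, hx, hseg⟩
    exact fwd (d + Γ.length) d C S Γ x₀ le_rfl hpure hdual.1 hdual.2 hdrop hlast hseg
  · rintro ⟨Γ', hmap, hnd, hmono, hcons⟩
    subst hmap
    cases Γ' with
    | nil => simp at hne
    | cons L0 Γt =>
      have hL0ne : L0 ≠ [] := by
        intro h0
        subst h0
        cases Γt with
        | nil =>
          have h1 := hlast (([] : List V).toFinset)
            (by rw [List.map_cons, List.map_nil]; exact Option.mem_some_iff.2 rfl)
          simp at h1
        | cons L1 Γr =>
          have h2 := hdual.2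
          rw [List.Chain', List.map_cons, List.map_cons, List.isChain_cons_cons] at h2
          have h3 := h2.1.2.2
          simp at h3
      refine ⟨L0.head hL0ne, L0.toFinset,
        (by rw [List.map_cons]; exact Option.mem_some_iff.2 rfl),
        head_mem_toFinset (List.head?_eq_head hL0ne), ?_⟩
      exact bwd (d + (List.map List.toFinset (L0 :: Γt)).length) d C S (L0 :: Γt)
        (by rw [List.length_map]) hpure hdual.1 hdual.2 hdrop hlast hnd hmono hcons
        L0 (Option.mem_some_iff.2 rfl) (L0.head hL0ne)
        (by rw [List.head?_eq_head hL0ne]; exact Option.mem_some_iff.2 rfl)
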